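/- arXiv:1803.03555 — 6 statements merged into one kernel-verified Lean document; each statement's English description precedes it below -/
import Mathlib

section
/- Let λ be a partition of n with all parts odd, let σ ∈ S_n have cycle type λ, and let π ∈ S_n be an m-involution (m ≥ 1) such that π σ π⁻¹ = σ⁻¹. Then (n − ℓ(λ))/2 ≤ m ≤ (n − m_o(λ))/2. -/
/-- `ℓ(λ)`: the number of parts of a partition. -/
def Nat.Partition.length {n : ℕ} (μ : Nat.Partition n) : ℕ :=
  Multiset.card μ.parts

/-- `m_o(λ)`: the number of distinct part-sizes of `λ` occurring with odd multiplicity. -/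
def Nat.Partition.oddMultCount {n : ℕ} (μ : Nat.Partition n) : ℕ :=
  (μ.parts.toFinset.filter fun i => Odd (μ.parts.count i)).card

/-- `σ ∈ S_n` has cycle type `λ` (a partition of `n`, counting fixed points as cycles of
length `1`) iff the Mathlib cycle type of `σ` (which omits fixed points) is the multiset of
parts of `λ` different from `1`. -/
def Equiv.Perm.hasCycleType {n : ℕ} (σ : Equiv.Perm (Fin n)) (l : Nat.Partition n) : Prop :=
  σ.cycleType = l.parts.filter fun i => i ≠ 1


lemma aux_invol_fixed {α : Type*} [DecidableEq α] (f : α → α) (T : Finset α)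
    (hmap : ∀ x ∈ T, f x ∈ T) (hinv : ∀ x ∈ T, f (f x) = x) (hodd : Odd T.card) :
    ∃ x ∈ T, f x = x := by
  induction T using Finset.strongInduction with
  | _ T ih =>
    have hne : T.Nonempty := by
      rcases hodd with ⟨u, hu⟩
      exact Finset.card_pos.mp (by omega)
    obtain ⟨a, ha⟩ := hne
    by_cases hfa : f a = a
    · exact ⟨a, ha, hfa⟩
    · set T' := (T.erase a).erase (f a) with hT'
      have hfaT : f a ∈ T.erase a := Finset.mem_erase.mpr ⟨hfa, hmap a ha⟩
      have hsub : T' ⊂ T :=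
        lt_of_le_of_lt (Finset.erase_subset _ _) (Finset.erase_ssubset ha)
      have hmem : ∀ x, x ∈ T' ↔ x ∈ T ∧ x ≠ a ∧ x ≠ f a := by
        intro x
        simp only [hT', Finset.mem_erase]
        tauto
      have hmap' : ∀ x ∈ T', f x ∈ T' := by
        intro x hx
        rw [hmem] at hx ⊢
        obtain ⟨hxT, hxa, hxfa⟩ := hx
        refine ⟨hmap x hxT, ?_, ?_⟩
        · intro h; apply hxfa; rw [← h, hinv x hxT]
        · intro h
          apply hxa
          have h1 := hinv x hxT
          rw [h, hinv a ha] at h1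
          exact h1.symm
      have hcard : T'.card = T.card - 2 := by
        rw [hT', Finset.card_erase_of_mem hfaT, Finset.card_erase_of_mem ha]; omega
      have h2le : 2 ≤ T.card := by
        have := Finset.card_erase_of_mem ha
        have h1 : 1 ≤ (T.erase a).card := Finset.card_pos.mpr ⟨f a, hfaT⟩
        omega
      have hodd' : Odd T'.card := by
        rw [hcard]
        rcases hodd with ⟨u, hu⟩
        exact ⟨u - 1, by omega⟩
      obtain ⟨x, hx, hfx⟩ := ih T' hsub hmap' (fun x hx => hinv x ((hmem x).mp hx).1) hodd'
      exact ⟨x, ((hmem x).mp hx).1, hfx⟩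


open Equiv Equiv.Perm

lemma aux_same_cycle_eq {n : ℕ} (σ π : Equiv.Perm (Fin n))
    (hinv : π * σ * π⁻¹ = σ⁻¹)
    (hoddc : ∀ d ∈ σ.cycleType, Odd d)
    {x y : Fin n} (hx : π x = x) (hy : π y = y) (hsc : σ.SameCycle x y) : x = y := by
  obtain ⟨k, -, hk⟩ := hsc.exists_pow_eq'
  have hconj : π * σ ^ k * π⁻¹ = (σ⁻¹) ^ k := by rw [← hinv, conj_pow]
  have hπσ : π * σ ^ k = (σ⁻¹) ^ k * π := by
    rw [← hconj]; group
  have hy2 : y = (σ⁻¹ ^ k) x := by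
    calc y = π y := hy.symm
    _ = π ((σ ^ k) x) := by rw [hk]
    _ = ((π * σ ^ k) x) := rfl
    _ = ((σ⁻¹ ^ k * π) x) := by rw [hπσ]
    _ = (σ⁻¹ ^ k) x := by simp [hx]
  have h2k : (σ ^ (2 * k)) x = x := by
    have : (σ ^ k) ((σ ^ k) x) = (σ ^ k) ((σ⁻¹ ^ k) x) :=
      congrArg _ (hk.trans hy2)
    calc (σ ^ (2 * k)) x = (σ ^ k * σ ^ k) x := by rw [two_mul, pow_add]
    _ = (σ ^ k) ((σ ^ k) x) := rfl
    _ = (σ ^ k) ((σ⁻¹ ^ k) x) := this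
    _ = (σ ^ k * (σ ^ k)⁻¹) x := by rw [inv_pow]; rfl
    _ = x := by simp
  by_cases hfx : σ x = x
  · rw [← hk, Equiv.Perm.pow_apply_eq_self_of_apply_eq_self hfx]
  · set c := σ.cycleOf x with hc
    have hcyc : c.IsCycle := σ.isCycle_cycleOf hfx
    have hcx : c x ≠ x := by rwa [hc, Equiv.Perm.cycleOf_apply_self]
    have hc2k : c ^ (2 * k) = 1 := by
      refine (hcyc.pow_eq_one_iff' hcx).mpr ?_
      rw [hc, Equiv.Perm.cycleOf_pow_apply_self]
      exact h2k
    have hdvd : orderOf c ∣ 2 * k := orderOf_dvd_of_pow_eq_one hc2k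
    have hmemct : c.support.card ∈ σ.cycleType := by
      rw [Equiv.Perm.cycleType]
      refine Multiset.mem_map_of_mem _ ?_
      rw [Finset.mem_val]
      exact Equiv.Perm.cycleOf_mem_cycleFactorsFinset_iff.mpr
        (Equiv.Perm.mem_support.mpr hfx)
    have hodd : Odd (orderOf c) := by rw [hcyc.orderOf]; exact hoddc _ hmemct
    have hdvdk : orderOf c ∣ k := by
      have hcop : (orderOf c).Coprime 2 := hodd.coprime_two_right
      exact (Nat.Coprime.dvd_of_dvd_mul_left hcop) hdvd
    have hck : c ^ k = 1 := orderOf_dvd_iff_pow_eq_one.mp hdvdk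
    have : (σ ^ k) x = x := by
      rw [← Equiv.Perm.cycleOf_pow_apply_self, ← hc, hck]; rfl
    rw [← hk, this]


open Equiv Equiv.Perm Finset

lemma aux_conj_factor_mem {n : ℕ} (σ π : Equiv.Perm (Fin n))
    (hinv : π * σ * π⁻¹ = σ⁻¹) {c : Equiv.Perm (Fin n)}
    (hc : c ∈ σ.cycleFactorsFinset) : π * c⁻¹ * π⁻¹ ∈ σ.cycleFactorsFinset := by
  obtain ⟨hcyc, hsupp⟩ := Equiv.Perm.mem_cycleFactorsFinset_iff.mp hc
  have hσπ : σ * π = π * σ⁻¹ := by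
    have h := congrArg Inv.inv hinv
    simp only [mul_inv_rev, inv_inv, ← mul_assoc] at h
    calc σ * π = π * σ⁻¹ * π⁻¹ * π := by rw [h]
    _ = π * σ⁻¹ := by group
  refine Equiv.Perm.mem_cycleFactorsFinset_iff.mpr ⟨hcyc.inv.conj, ?_⟩
  intro a ha
  rw [Equiv.Perm.support_conj, Finset.mem_map] at ha
  obtain ⟨y, hy, rfl⟩ := ha
  rw [Equiv.Perm.support_inv] at hy
  have hinvy : c⁻¹ y = σ⁻¹ y := by
    have hy' : c⁻¹ y ∈ c.support := by
      rw [← Equiv.Perm.support_inv, Equiv.Perm.apply_mem_support, Equiv.Perm.support_inv]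
      exact hy
    have := hsupp _ hy'
    -- this : c (c⁻¹ y) = σ (c⁻¹ y)
    rw [(show ∀ (f : Equiv.Perm (Fin n)) x, f (f⁻¹ x) = x from fun f x => f.apply_symm_apply x)] at this
    exact σ.injective (by rw [(show ∀ (f : Equiv.Perm (Fin n)) x, f (f⁻¹ x) = x from fun f x => f.apply_symm_apply x), ← this])
  show (π * c⁻¹ * π⁻¹) (π.toEmbedding y) = σ (π.toEmbedding y)
  simp only [Equiv.toEmbedding_apply, Equiv.Perm.mul_apply, (show ∀ (f : Equiv.Perm (Fin n)) x, f⁻¹ (f x) = x from fun f x => f.symm_apply_apply x)]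
  calc π (c⁻¹ y) = π (σ⁻¹ y) := by rw [hinvy]
  _ = (π * σ⁻¹) y := rfl
  _ = (σ * π) y := by rw [hσπ]
  _ = σ (π y) := rfl

lemma aux_exists_fixed_in_cycle {n : ℕ} (π c : Equiv.Perm (Fin n))
    (hcc : π * c * π⁻¹ = c⁻¹) (hcyc : c.IsCycle) (hoddi : Odd c.support.card) :
    ∃ x ∈ c.support, π x = x := by
  obtain ⟨x₀, hx₀, -⟩ := id hcyc
  have hx₀s : x₀ ∈ c.support := Equiv.Perm.mem_support.mpr hx₀
  have hπx₀ : π x₀ ∈ c.support := by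
    have h1 : c.support.map π.toEmbedding = c.support := by
      rw [← Equiv.Perm.support_conj (σ := π) (τ := c), hcc, Equiv.Perm.support_inv]
    rw [← h1]
    exact Finset.mem_map_of_mem _ hx₀s
  obtain ⟨j, -, hj⟩ := (hcyc.sameCycle hx₀ (Equiv.Perm.mem_support.mp hπx₀)).exists_pow_eq'
  obtain ⟨t, ht⟩ := hoddi
  set k := j * (t + 1) with hk
  have hci : c ^ c.support.card = 1 := by
    rw [← hcyc.orderOf]; exact pow_orderOf_eq_one c
  have h2k : c ^ (2 * k) = c ^ j := by
    have h' : 2 * k = c.support.card * j + j := by rw [hk, ht]; ring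
    rw [h', pow_add, pow_mul, hci, one_pow, one_mul]
  have hπck : π * c ^ k = (c ^ k)⁻¹ * π := by
    have hthis := conj_pow (a := π) (b := c) (i := k)
    rw [hcc] at hthis
    rw [← inv_pow, hthis]
    group
  refine ⟨(c ^ k) x₀, ?_, ?_⟩
  · rw [Equiv.Perm.pow_apply_mem_support]; exact hx₀s
  · calc π ((c ^ k) x₀) = (π * c ^ k) x₀ := rfl
    _ = ((c ^ k)⁻¹ * π) x₀ := by rw [hπck]
    _ = (c ^ k)⁻¹ (π x₀) := rfl
    _ = (c ^ k)⁻¹ ((c ^ j) x₀) := by rw [hj]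
    _ = ((c ^ k)⁻¹ * c ^ (2 * k)) x₀ := by rw [h2k]; rfl
    _ = (c ^ k) x₀ := by
        congr 1
        rw [two_mul, pow_add]
        group


lemma aux_comm {n : ℕ} (σ π : Equiv.Perm (Fin n)) (hinv : π * σ * π⁻¹ = σ⁻¹) :
    σ * π = π * σ⁻¹ := by
  have h := congrArg Inv.inv hinv
  simp only [mul_inv_rev, inv_inv, ← mul_assoc] at h
  calc σ * π = π * σ⁻¹ * π⁻¹ * π := by rw [h]
  _ = π * σ⁻¹ := by group

theorem main_test {n : ℕ} (l : Nat.Partition n)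
    (hodd : ∀ i ∈ l.parts, Odd i)
    (σ : Equiv.Perm (Fin n)) (hσ : σ.cycleType = l.parts.filter fun i => i ≠ 1)
    (m : ℕ) (hm : 1 ≤ m) (π : Equiv.Perm (Fin n))
    (hπ : π.cycleType = Multiset.replicate m 2)
    (hinv : π * σ * π⁻¹ = σ⁻¹) :
    n ≤ 2 * m + Multiset.card l.parts ∧
      2 * m + (l.parts.toFinset.filter fun i => Odd (l.parts.count i)).card ≤ n := by
  classical
  have hσodd : ∀ d ∈ σ.cycleType, Odd d := by
    intro d hd
    rw [hσ] at hd
    exact hodd d (Multiset.mem_of_mem_filter hd)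
  -- order of π
  have horder : orderOf π = 2 := by
    rw [← Equiv.Perm.lcm_cycleType, hπ]
    refine Nat.dvd_antisymm (Multiset.lcm_dvd.mpr fun b hb => ?_)
      (Multiset.dvd_lcm (Multiset.mem_replicate.mpr ⟨by omega, rfl⟩))
    rw [Multiset.eq_of_mem_replicate hb]
  have hππ : π * π = 1 := by
    have h := pow_orderOf_eq_one π
    rwa [horder, sq] at h
  have hπinv : π⁻¹ = π := inv_eq_of_mul_eq_one_left hππ
  have hsupπ : π.support.card = 2 * m := by
    rw [← Equiv.Perm.sum_cycleType, hπ, Multiset.sum_replicate, smul_eq_mul, mul_comm]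
  set Fixπ := π.supportᶜ with hFixdef
  have hFixmem : ∀ x, x ∈ Fixπ ↔ π x = x := fun x => by
    rw [hFixdef, Finset.mem_compl, Equiv.Perm.notMem_support]
  have hFixcard : 2 * m + Fixπ.card = n := by
    have h := Finset.card_add_card_compl π.support
    rw [hsupπ, Fintype.card_fin] at h
    exact h
  set c1 := l.parts.count 1 with hc1
  have hfilter1 : l.parts.filter (fun i => ¬ i ≠ 1) = Multiset.replicate c1 1 := by
    rw [Multiset.filter_congr (fun x _ => by simp : ∀ x ∈ l.parts, (¬ x ≠ 1) ↔ x = 1)]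
    exact Multiset.filter_eq' l.parts 1
  have hsum : σ.cycleType.sum + c1 = n := by
    have h := congrArg Multiset.sum (Multiset.filter_add_not (fun i => i ≠ 1) l.parts)
    rw [hfilter1, Multiset.sum_add, Multiset.sum_replicate, smul_eq_mul, mul_one,
      l.parts_sum] at h
    rw [hσ]
    exact h
  have hlen : Multiset.card σ.cycleType + c1 = Multiset.card l.parts := by
    have h := congrArg Multiset.card (Multiset.filter_add_not (fun i => i ≠ 1) l.parts)
    rw [hfilter1, Multiset.card_add, Multiset.card_replicate] at h
    rw [hσ]
    exact h
  have hsupσ : σ.support.card + c1 = n := by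
    rw [← Equiv.Perm.sum_cycleType]; exact hsum
  have hcomm := aux_comm σ π hinv
  -- fixed points of σ
  have hfixσcard : (σ.supportᶜ : Finset (Fin n)).card = c1 := by
    rw [Finset.card_compl, Fintype.card_fin]
    omega
  ----- LOWER BOUND -----
  have hfcard : σ.cycleFactorsFinset.card = Multiset.card σ.cycleType := by
    simp [Equiv.Perm.cycleType]
  have hAcard : (Fixπ ∩ σ.support).card ≤ σ.cycleFactorsFinset.card := by
    refine Finset.card_le_card_of_injOn (fun x => σ.cycleOf x) ?_ ?_
    · intro x hx
      rw [Finset.mem_coe, Finset.mem_inter] at hx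
      exact Equiv.Perm.cycleOf_mem_cycleFactorsFinset_iff.mpr hx.2
    · intro x hx y hy heq
      rw [Finset.mem_coe, Finset.mem_inter] at hx hy
      have heq' : σ.cycleOf x = σ.cycleOf y := heq
      have hyc : y ∈ (σ.cycleOf x).support := by
        rw [heq']
        exact Equiv.Perm.mem_support_cycleOf_iff.mpr ⟨Equiv.Perm.SameCycle.refl _ _, hy.2⟩
      exact aux_same_cycle_eq σ π hinv hσodd ((hFixmem x).mp hx.1) ((hFixmem y).mp hy.1)
        (Equiv.Perm.mem_support_cycleOf_iff.mp hyc).1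
  have hBcard : (Fixπ \ σ.support).card ≤ c1 := by
    rw [← hfixσcard]
    refine Finset.card_le_card (fun x hx => ?_)
    rw [Finset.mem_compl]
    exact (Finset.mem_sdiff.mp hx).2
  have hlow : n ≤ 2 * m + Multiset.card l.parts := by
    have hsplitF := Finset.card_inter_add_card_sdiff Fixπ σ.support
    omega
  ----- UPPER BOUND -----
  set sz : Fin n → ℕ := fun x => if σ x = x then 1 else (σ.cycleOf x).support.card with hsz
  set S := l.parts.toFinset.filter (fun i => Odd (l.parts.count i)) with hS
  have hkey : ∀ i ∈ S, ∃ x ∈ Fixπ, sz x = i := by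
    intro i hi
    rw [hS, Finset.mem_filter, Multiset.mem_toFinset] at hi
    obtain ⟨hiparts, hicount⟩ := hi
    by_cases hi1 : i = 1
    · subst hi1
      have hmapT : ∀ x ∈ (σ.supportᶜ : Finset (Fin n)), π x ∈ (σ.supportᶜ : Finset (Fin n)) := by
        intro x hx
        rw [Finset.mem_compl, Equiv.Perm.notMem_support] at hx ⊢
        have hx' : σ⁻¹ x = x := by
          apply σ.injective
          rw [(show ∀ (f : Equiv.Perm (Fin n)) x, f (f⁻¹ x) = x from fun f x => f.apply_symm_apply x), hx]
        calc σ (π x) = (σ * π) x := rfl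
        _ = (π * σ⁻¹) x := by rw [hcomm]
        _ = π (σ⁻¹ x) := rfl
        _ = π x := by rw [hx']
      have hinvT : ∀ x ∈ (σ.supportᶜ : Finset (Fin n)), π (π x) = x := by
        intro x _
        calc π (π x) = (π * π) x := rfl
        _ = x := by rw [hππ]; rfl
      obtain ⟨x, hxT, hfx⟩ := aux_invol_fixed (fun x => π x) σ.supportᶜ hmapT hinvT
        (by rw [hfixσcard]; exact hicount)
      refine ⟨x, (hFixmem x).mpr hfx, ?_⟩
      rw [Finset.mem_compl, Equiv.Perm.notMem_support] at hxT
      rw [hsz]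
      simp only [if_pos hxT]
    · have hcnt' : σ.cycleType.count i = l.parts.count i := by
        rw [hσ, Multiset.count_filter, if_pos hi1]
      set T := σ.cycleFactorsFinset.filter (fun c => c.support.card = i) with hT
      have hTcard : T.card = σ.cycleType.count i := by
        rw [Equiv.Perm.cycleType, Multiset.count_map, hT, Finset.card_def, Finset.filter_val]
        apply congrArg Multiset.card
        exact Multiset.filter_congr (fun x _ => eq_comm)
      set g : Equiv.Perm (Fin n) → Equiv.Perm (Fin n) := fun c => π * c⁻¹ * π⁻¹ with hg
      have hmapT : ∀ c ∈ T, g c ∈ T := by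
        intro c hc
        rw [hT, Finset.mem_filter] at hc ⊢
        refine ⟨aux_conj_factor_mem σ π hinv hc.1, ?_⟩
        rw [hg]
        show ((π * c⁻¹ * π⁻¹).support).card = i
        rw [Equiv.Perm.card_support_conj]
        rw [Equiv.Perm.support_inv]
        exact hc.2
      have hggT : ∀ c ∈ T, g (g c) = c := by
        intro c _
        have h1 : g (g c) = (π * π) * c * (π⁻¹ * π⁻¹) := by
          show π * (π * c⁻¹ * π⁻¹)⁻¹ * π⁻¹ = _
          group
        rw [h1, hππ, hπinv, hππ, one_mul, mul_one]
      obtain ⟨c, hcT, hgc⟩ := aux_invol_fixed g T hmapT hggT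
        (by rw [hTcard, hcnt']; exact hicount)
      rw [hT, Finset.mem_filter] at hcT
      obtain ⟨hcf, hcsupp⟩ := hcT
      have hcyc := (Equiv.Perm.mem_cycleFactorsFinset_iff.mp hcf).1
      have hcc : π * c * π⁻¹ = c⁻¹ := by
        have hgc' : π * c⁻¹ * π⁻¹ = c := hgc
        have h2 := congrArg Inv.inv hgc'
        rw [← h2]
        group
      obtain ⟨x, hxs, hπx⟩ := aux_exists_fixed_in_cycle π c hcc hcyc
        (by rw [hcsupp]; exact hodd i hiparts)
      refine ⟨x, (hFixmem x).mpr hπx, ?_⟩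
      have hσx : σ x ≠ x := by
        have h3 := (Equiv.Perm.mem_cycleFactorsFinset_iff.mp hcf).2 x hxs
        rw [← h3]
        exact Equiv.Perm.mem_support.mp hxs
      have h4 : c = σ.cycleOf x := Equiv.Perm.cycle_is_cycleOf hxs hcf
      rw [hsz]
      simp only [if_neg hσx]
      rw [← h4]
      exact hcsupp
  have hScard : S.card ≤ Fixπ.card := by
    refine Finset.card_le_card_of_surjOn sz ?_
    intro i hi
    obtain ⟨x, hx, hszx⟩ := hkey i (Finset.mem_coe.mp hi)
    exact ⟨x, Finset.mem_coe.mpr hx, hszx⟩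
  exact ⟨hlow, by omega⟩

/-- Let `λ` be a partition of `n` with all parts odd, let `σ ∈ S_n` have cycle type `λ`,
and let `π` be an `m`-involution (`m ≥ 1`, i.e. a product of `m` pairwise disjoint
transpositions) with `π σ π⁻¹ = σ⁻¹`.  Then `(n − ℓ(λ))/2 ≤ m ≤ (n − m_o(λ))/2`. -/
theorem involution_inverting_bounds {n : ℕ} (l : Nat.Partition n)
    (hodd : ∀ i ∈ l.parts, Odd i)
    (σ : Equiv.Perm (Fin n)) (hσ : σ.hasCycleType l)
    (m : ℕ) (hm : 1 ≤ m) (π : Equiv.Perm (Fin n))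
    (hπ : π.cycleType = Multiset.replicate m 2)
    (hinv : π * σ * π⁻¹ = σ⁻¹) :
    ((n : ℚ) - l.length) / 2 ≤ m ∧ (m : ℚ) ≤ ((n : ℚ) - l.oddMultCount) / 2 := by
  obtain ⟨h1, h2⟩ := main_test l hodd σ hσ m hm π hπ hinv
  have hl : l.length = Multiset.card l.parts := rfl
  have hmo : l.oddMultCount = (l.parts.toFinset.filter fun i => Odd (l.parts.count i)).card :=
    rfl
  constructor
  · rw [div_le_iff₀ (by norm_num : (0:ℚ) < 2)]
    have h3 : (n:ℚ) ≤ 2 * m + l.length := by rw [hl]; exact_mod_cast h1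
    linarith
  · rw [le_div_iff₀ (by norm_num : (0:ℚ) < 2)]
    have h3 : 2 * (m:ℚ) + l.oddMultCount ≤ n := by rw [hmo]; exact_mod_cast h2
    linarith
end

section
/- Let λ be a partition of n with all parts odd and let σ ∈ S_n have cycle type λ. Then for every integer m with (n − ℓ(λ))/2 ≤ m ≤ (n − m_o(λ))/2 there exists a permutation π ∈ S_n that is a product of exactly m pairwise disjoint transpositions (the identity if m = 0) such that π σ π⁻¹ = σ⁻¹. -/
open Equiv Equiv.Perm Multiset

section Lemmas
variable {α β : Type*} [DecidableEq α] [Fintype α] [DecidableEq β] [Fintype β]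

lemma cycleType_permCongr (e : α ≃ β) (σ : Perm α) :
    (e.permCongr σ).cycleType = σ.cycleType := by
  classical
  have hp : ∀ x : β, (fun _ : β => True) x := fun _ => trivial
  let f : α ≃ {x : β // True} := e.trans (Equiv.subtypeUnivEquiv hp).symm
  have key : e.permCongr σ = σ.extendDomain f := by
    ext b
    rw [Equiv.Perm.extendDomain_apply_subtype σ f (b := b) trivial]
    simp [f, Equiv.subtypeUnivEquiv]
  rw [key, Equiv.Perm.cycleType_extendDomain]

/-- The equiv from `α` to the left part of `α ⊕ β`. -/
def sumLeftEquiv : α ≃ {x : α ⊕ β // x.isLeft = true} where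
  toFun a := ⟨Sum.inl a, rfl⟩
  invFun x := x.1.getLeft x.2
  left_inv a := rfl
  right_inv := by
    rintro ⟨x | x, h⟩
    · rfl
    · simp at h

lemma sumCongr_one_right (σ : Perm α) :
    (Equiv.sumCongr σ (1 : Perm β)) = σ.extendDomain (sumLeftEquiv (β := β)) := by
  ext x
  cases x with
  | inl a =>
      rw [Equiv.Perm.extendDomain_apply_subtype σ (sumLeftEquiv (β := β))
        (b := Sum.inl a) rfl]
      simp [sumLeftEquiv]
      rfl
  | inr b =>
      rw [Equiv.Perm.extendDomain_apply_not_subtype σ (sumLeftEquiv (β := β))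
        (b := Sum.inr b) (by simp)]
      simp

lemma cycleType_sumCongr_one_right (σ : Perm α) :
    Equiv.Perm.cycleType (Equiv.sumCongr σ (1 : Perm β)) = σ.cycleType := by
  rw [sumCongr_one_right]; exact Equiv.Perm.cycleType_extendDomain _

lemma sumCongr_one_left (τ : Perm β) :
    (Equiv.sumCongr (1 : Perm α) τ) = (Equiv.sumComm β α).permCongr (Equiv.sumCongr τ (1 : Perm α)) := by
  ext x
  cases x <;> rfl

lemma cycleType_sumCongr (σ : Perm α) (τ : Perm β) :
    Equiv.Perm.cycleType (Equiv.sumCongr σ τ) = σ.cycleType + τ.cycleType := by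
  have hmul : Equiv.sumCongr σ τ
      = (Equiv.sumCongr σ (1 : Perm β)) * (Equiv.sumCongr (1 : Perm α) τ) := by
    ext x; cases x <;> simp
  have hdisj : Equiv.Perm.Disjoint (Equiv.sumCongr σ (1 : Perm β)) (Equiv.sumCongr (1 : Perm α) τ) := by
    intro x; cases x with
    | inl a => right; simp
    | inr b => left; simp
  rw [hmul, hdisj.cycleType_mul, cycleType_sumCongr_one_right, sumCongr_one_left,
    cycleType_permCongr, cycleType_sumCongr_one_right]

lemma cycleType_of_sq_eq_one {σ : Perm α} (h : σ * σ = 1) :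
    σ.cycleType = Multiset.replicate (σ.support.card / 2) 2 := by
  have horder : orderOf σ ∣ 2 := orderOf_dvd_of_pow_eq_one (by rwa [pow_two])
  have h2 : ∀ x ∈ σ.cycleType, x = 2 := by
    intro x hx
    have hdvd : x ∣ 2 := (Multiset.dvd_lcm hx).trans (by rw [Equiv.Perm.lcm_cycleType]; exact horder)
    have h1 := Equiv.Perm.two_le_of_mem_cycleType hx
    have h3 := Nat.le_of_dvd (by norm_num) hdvd
    omega
  have hrep := Multiset.eq_replicate_card.mpr h2
  have hsum := Equiv.Perm.sum_cycleType σ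
  rw [hrep, Multiset.sum_replicate, smul_eq_mul] at hsum
  rw [hrep, ← hsum]
  congr 1
  omega

lemma sq_eq_one_of_cycleType {σ : Perm α} {w : ℕ}
    (h : σ.cycleType = Multiset.replicate w 2) : σ * σ = 1 := by
  rw [← pow_two]
  rw [← orderOf_dvd_iff_pow_eq_one, ← Equiv.Perm.lcm_cycleType, h]
  exact Multiset.lcm_dvd.mpr fun x hx => by rw [Multiset.eq_of_mem_replicate hx]

end Lemmas
set_option linter.unusedSectionVars false

/-- Bundled data: a permutation `σ` of prescribed cycle type together with an involution-like
`π` of cycle type `replicate w 2` conjugating `σ` to `σ⁻¹`. -/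
structure InvT (α : Type) [DecidableEq α] [Fintype α] (P : Multiset ℕ) (w : ℕ) where
  σ : Equiv.Perm α
  π : Equiv.Perm α
  hσ : σ.cycleType = P.filter (· ≠ 1)
  hπ : π.cycleType = Multiset.replicate w 2
  hc : π * σ * π⁻¹ = σ⁻¹

section Ops
variable {α β : Type} [DecidableEq α] [Fintype α] [DecidableEq β] [Fintype β]
  {P Q : Multiset ℕ} {w v : ℕ}

lemma permCongr_mul (e : α ≃ β) (σ τ : Equiv.Perm α) :
    e.permCongr (σ * τ) = e.permCongr σ * e.permCongr τ := by
  ext x; simp [Equiv.permCongr_apply, Equiv.Perm.mul_apply]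

lemma permCongr_inv (e : α ≃ β) (σ : Equiv.Perm α) :
    e.permCongr σ⁻¹ = (e.permCongr σ)⁻¹ := by
  ext x; simp [Equiv.permCongr_apply]
  rfl

/-- Transport along an equivalence of types. -/
def InvT.congr (e : α ≃ β) (I : InvT α P w) : InvT β P w where
  σ := e.permCongr I.σ
  π := e.permCongr I.π
  hσ := by rw [cycleType_permCongr, I.hσ]
  hπ := by rw [cycleType_permCongr, I.hπ]
  hc := by rw [← permCongr_inv, ← permCongr_mul, ← permCongr_mul, I.hc, permCongr_inv]

lemma sumCongr_perm_mul (a c : Equiv.Perm α) (b d : Equiv.Perm β) :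
    (Equiv.sumCongr a b * Equiv.sumCongr c d : Equiv.Perm (α ⊕ β))
      = Equiv.sumCongr (a * c) (b * d) := by
  ext x; cases x <;> rfl

lemma sumCongr_perm_inv (a : Equiv.Perm α) (b : Equiv.Perm β) :
    (Equiv.sumCongr a b : Equiv.Perm (α ⊕ β))⁻¹ = Equiv.sumCongr a⁻¹ b⁻¹ := by
  ext x; cases x <;> rfl

/-- Disjoint union of two pieces of data. -/
def InvT.sum (I : InvT α P w) (J : InvT β Q v) : InvT (α ⊕ β) (P + Q) (w + v) where
  σ := Equiv.sumCongr I.σ J.σ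
  π := Equiv.sumCongr I.π J.π
  hσ := by rw [cycleType_sumCongr, I.hσ, J.hσ, Multiset.filter_add]
  hπ := by
    rw [cycleType_sumCongr, I.hπ, J.hπ]
    rw [← Multiset.replicate_add]
  hc := by
    rw [sumCongr_perm_inv, sumCongr_perm_mul, sumCongr_perm_mul, sumCongr_perm_inv, I.hc, J.hc]

/-- The trivial data on the empty type. -/
def InvT.base : InvT (Fin 0) 0 0 where
  σ := 1
  π := 1
  hσ := by simp
  hπ := by simp
  hc := by
    ext x
    exact x.elim0

/-- The involution on `α ⊕ α` sending `inl x` to `inr (π₀ x)` and `inr x` to `inl (π₀ x)`. -/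
def swapPerm (π₀ : Equiv.Perm α) : Equiv.Perm (α ⊕ α) :=
  Equiv.sumComm α α * (Equiv.sumCongr π₀ π₀ : Equiv.Perm (α ⊕ α))

@[simp] lemma swapPerm_apply_inl (π₀ : Equiv.Perm α) (x : α) :
    swapPerm π₀ (Sum.inl x) = Sum.inr (π₀ x) := rfl

@[simp] lemma swapPerm_apply_inr (π₀ : Equiv.Perm α) (x : α) :
    swapPerm π₀ (Sum.inr x) = Sum.inl (π₀ x) := rfl

lemma swapPerm_sq (π₀ : Equiv.Perm α) (h : π₀ * π₀ = 1) :
    swapPerm π₀ * swapPerm π₀ = 1 := by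
  have hfix : ∀ a, π₀ (π₀ a) = a := fun a => by
    rw [← Equiv.Perm.mul_apply, h]; rfl
  ext x
  cases x <;> simp [Equiv.Perm.mul_apply, hfix]

lemma swapPerm_support (π₀ : Equiv.Perm α) :
    (swapPerm π₀).support = Finset.univ := by
  ext x
  simp only [Equiv.Perm.mem_support, Finset.mem_univ, iff_true]
  cases x <;> simp

lemma swapPerm_cycleType (π₀ : Equiv.Perm α) (h : π₀ * π₀ = 1) :
    (swapPerm π₀).cycleType = Multiset.replicate (Fintype.card α) 2 := by
  rw [cycleType_of_sq_eq_one (swapPerm_sq π₀ h), swapPerm_support]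
  congr 1
  simp [Fintype.card_sum]
  omega

/-- Doubling: given data on `α` realizing parts `P`, the permutation consisting of two disjoint
copies can be inverted by an involution swapping the copies, with `card α` transpositions. -/
def InvT.pair (I : InvT α P w) : InvT (α ⊕ α) (P + P) (Fintype.card α) where
  σ := Equiv.sumCongr I.σ I.σ
  π := swapPerm I.π
  hσ := by rw [cycleType_sumCongr, I.hσ, Multiset.filter_add]
  hπ := swapPerm_cycleType I.π (sq_eq_one_of_cycleType I.hπ)
  hc := by
    have key : ∀ a, I.π (I.σ a) = I.σ⁻¹ (I.π a) := by
      intro a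
      have h2 : I.π * I.σ = I.σ⁻¹ * I.π := by
        calc I.π * I.σ = I.π * I.σ * I.π⁻¹ * I.π := by group
        _ = I.σ⁻¹ * I.π := by rw [I.hc]
      rw [← Equiv.Perm.mul_apply, h2]; rfl
    have hgoal : swapPerm I.π * Equiv.sumCongr I.σ I.σ
        = (Equiv.sumCongr I.σ I.σ : Equiv.Perm (α ⊕ α))⁻¹ * swapPerm I.π := by
      ext x
      cases x with
      | inl a =>
          rw [Equiv.Perm.mul_apply, Equiv.Perm.mul_apply, sumCongr_perm_inv]
          simp [key a]
      | inr a =>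
          rw [Equiv.Perm.mul_apply, Equiv.Perm.mul_apply, sumCongr_perm_inv]
          simp [key a]
    calc swapPerm I.π * Equiv.sumCongr I.σ I.σ * (swapPerm I.π)⁻¹
        = (Equiv.sumCongr I.σ I.σ : Equiv.Perm (α ⊕ α))⁻¹ * swapPerm I.π * (swapPerm I.π)⁻¹ := by
          rw [hgoal]
      _ = (Equiv.sumCongr I.σ I.σ : Equiv.Perm (α ⊕ α))⁻¹ := by group

end Ops
section Single
variable (j : ℕ)

lemma zmod_neg_eq_self_iff (hodd : Odd (j + 1)) (x : ZMod (j + 1)) :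
    -x = x ↔ x = 0 := by
  constructor
  · intro hx
    have h2 : x + x = 0 := by nth_rewrite 1 [← hx]; exact neg_add_cancel x
    obtain ⟨c, hc⟩ := hodd
    have hone : ((2 * (c + 1) : ℕ) : ZMod (j + 1)) = 1 := by
      have : 2 * (c + 1) = (j + 1) + 1 := by omega
      rw [this]
      push_cast
      simp [ZMod.natCast_self]
    calc x = ((2 * (c + 1) : ℕ) : ZMod (j + 1)) * x := by rw [hone, one_mul]
    _ = ((c : ZMod (j+1)) + 1) * (x + x) := by push_cast; ring
    _ = 0 := by rw [h2, mul_zero]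
  · intro hx; simp [hx]

/-- The basic single-cycle block: the cycle `x ↦ x + 1` on `ZMod (j+1)` is inverted by
the negation involution, which is a product of `j/2` transpositions when `j+1` is odd. -/
def InvT.single (hodd : Odd (j + 1)) : InvT (ZMod (j + 1)) {j + 1} (j / 2) where
  σ := Equiv.addRight (1 : ZMod (j + 1))
  π := Equiv.neg (ZMod (j + 1))
  hσ := by
    rcases Nat.eq_zero_or_pos j with hj | hj
    · subst hj
      have : (Equiv.addRight (1 : ZMod 1)) = 1 := by
        ext x
        exact Subsingleton.elim _ _
      rw [this, Equiv.Perm.cycleType_one]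
      decide
    · haveI : Fact (1 < j + 1) := ⟨by omega⟩
      have hcyc : (Equiv.addRight (1 : ZMod (j + 1))).IsCycle := by
        refine ⟨0, by simp, fun y hy => ?_⟩
        refine ⟨(y.val : ℤ), ?_⟩
        rw [zpow_natCast]
        have hp : ∀ n : ℕ, ((Equiv.addRight (1 : ZMod (j + 1))) ^ n)
            = Equiv.addRight (n : ZMod (j + 1)) := by
          intro n
          induction n with
          | zero => ext x; simp
          | succ n ih =>
              rw [pow_succ, ih]; ext x
              simp only [Equiv.Perm.mul_apply, Equiv.coe_addRight, Nat.cast_succ]; ring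
        simp only [hp, Equiv.coe_addRight]
        simp [ZMod.natCast_val, ZMod.cast_id]
      have hsupp : (Equiv.addRight (1 : ZMod (j + 1))).support = Finset.univ := by
        ext x
        simp [Equiv.Perm.mem_support]
      rw [hcyc.cycleType, hsupp]
      rw [Multiset.filter_eq_self.mpr]
      · congr 1
        simp [ZMod.card]
      · intro a ha
        rw [Multiset.mem_singleton] at ha
        subst ha
        simp
        omega
  hπ := by
    have hsq : Equiv.neg (ZMod (j + 1)) * Equiv.neg (ZMod (j + 1)) = 1 := by
      ext x; simp [Equiv.Perm.mul_apply]
    rw [cycleType_of_sq_eq_one hsq]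
    congr 1
    have hsupp : (Equiv.neg (ZMod (j + 1))).support = {(0 : ZMod (j+1))}ᶜ := by
      ext x
      simp [Equiv.Perm.mem_support, zmod_neg_eq_self_iff j hodd]
    rw [hsupp]
    rw [Finset.card_compl]
    simp [ZMod.card]
  hc := by
    have hinv : (Equiv.neg (ZMod (j + 1)))⁻¹ = Equiv.neg (ZMod (j + 1)) := by
      ext x; rfl
    ext x
    rw [Equiv.Perm.mul_apply, Equiv.Perm.mul_apply, hinv]
    simp
    ring

end Single
section Blocks

/-- The multiset of parts contributed by a block: `(k, false)` is a single `k`-cycle,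
`(k, true)` a pair of `k`-cycles. -/
def bParts : ℕ × Bool → Multiset ℕ
  | (k, false) => {k}
  | (k, true) => {k, k}

/-- The number of transpositions contributed by a block. -/
def bWeight : ℕ × Bool → ℕ
  | (k, false) => (k - 1) / 2
  | (k, true) => k

def LParts (L : List (ℕ × Bool)) : Multiset ℕ := (L.map bParts).sum
def LWeight (L : List (ℕ × Bool)) : ℕ := (L.map bWeight).sum

@[simp] lemma LParts_nil : LParts [] = 0 := rfl
@[simp] lemma LWeight_nil : LWeight [] = 0 := rfl
@[simp] lemma LParts_cons (b : ℕ × Bool) (L : List (ℕ × Bool)) :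
    LParts (b :: L) = bParts b + LParts L := by simp [LParts]
@[simp] lemma LWeight_cons (b : ℕ × Bool) (L : List (ℕ × Bool)) :
    LWeight (b :: L) = bWeight b + LWeight L := by simp [LWeight]

/-- A model for each block, on `Fin` of the right size. -/
lemma block_model (k : ℕ) (hk : k ≠ 0) (hodd : Odd k) (b : Bool) :
    Nonempty (InvT (Fin (bParts (k, b)).sum) (bParts (k, b)) (bWeight (k, b))) := by
  obtain ⟨j, rfl⟩ : ∃ j, k = j + 1 := ⟨k - 1, by omega⟩
  cases b with
  | false =>
      have I := InvT.single j hodd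
      have hcard : Fintype.card (ZMod (j + 1)) = (bParts (j + 1, false)).sum := by
        simp [ZMod.card, bParts]
      have hw : bWeight (j + 1, false) = j / 2 := by simp [bWeight]
      rw [hw]
      have hP : bParts (j + 1, false) = {j + 1} := rfl
      rw [hP]
      exact ⟨I.congr (Fintype.equivFinOfCardEq hcard)⟩
  | true =>
      have I := (InvT.single j hodd).pair
      have hcard : Fintype.card (ZMod (j + 1) ⊕ ZMod (j + 1)) = (bParts (j + 1, true)).sum := by
        simp [ZMod.card, bParts]
      have hP : bParts (j + 1, true) = ({j + 1} : Multiset ℕ) + {j + 1} := rfl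
      have hw : bWeight (j + 1, true) = Fintype.card (ZMod (j + 1)) := by
        simp [bWeight, ZMod.card]
      rw [hP, hw]
      exact ⟨I.congr (Fintype.equivFinOfCardEq hcard)⟩

/-- Assembling the models of a list of blocks. -/
lemma list_model (L : List (ℕ × Bool)) (h : ∀ b ∈ L, b.1 ≠ 0 ∧ Odd b.1) :
    Nonempty (InvT (Fin (LParts L).sum) (LParts L) (LWeight L)) := by
  induction L with
  | nil => exact ⟨InvT.base⟩
  | cons b L ih =>
      obtain ⟨I⟩ := block_model b.1 (h b (by simp)).1 (h b (by simp)).2 b.2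
      obtain ⟨J⟩ := ih (fun c hc => h c (by simp [hc]))
      have hsum : (LParts (b :: L)).sum = (bParts b).sum + (LParts L).sum := by
        rw [LParts_cons, Multiset.sum_add]
      have K : InvT (Fin ((bParts b).sum + (LParts L).sum))
          (bParts b + LParts L) (bWeight b + LWeight L) := by
        have hb : bParts (b.1, b.2) = bParts b := by cases b; rfl
        have hw : bWeight (b.1, b.2) = bWeight b := by cases b; rfl
        rw [hb, hw] at I
        exact (I.sum J).congr finSumFinEquiv
      rw [LParts_cons, LWeight_cons, Multiset.sum_add]
      exact ⟨K⟩

end Blocks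
section Comb

/-- Number of part-sizes occurring with odd multiplicity. -/
def oddCnt (s : Multiset ℕ) : ℕ := (s.toFinset.filter fun i => Odd (s.count i)).card

lemma multiset_card_le_sum (s : Multiset ℕ) (h : ∀ x ∈ s, 1 ≤ x) :
    Multiset.card s ≤ s.sum := by
  induction s using Multiset.induction with
  | empty => simp
  | cons a t ih =>
      simp only [Multiset.card_cons, Multiset.sum_cons]
      have := h a (by simp)
      have := ih (fun x hx => h x (by simp [hx]))
      omega

lemma oddCnt_erase_of_odd {s : Multiset ℕ} {k : ℕ} (hk : k ∈ s)
    (hodd : Odd (s.count k)) : oddCnt (s.erase k) + 1 ≤ oddCnt s := by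
  classical
  set t := s.erase k with ht
  have hknot : k ∉ t.toFinset.filter fun i => Odd (t.count i) := by
    simp only [Finset.mem_filter, not_and]
    intro _
    rw [ht, Multiset.count_erase_self]
    rcases hodd with ⟨d, hd⟩
    rw [hd]
    simp [Nat.odd_iff, Nat.even_iff]
  have hsub : insert k (t.toFinset.filter fun i => Odd (t.count i))
      ⊆ s.toFinset.filter fun i => Odd (s.count i) := by
    intro j hj
    rcases Finset.mem_insert.mp hj with rfl | hj
    · exact Finset.mem_filter.mpr ⟨Multiset.mem_toFinset.mpr hk, hodd⟩
    · obtain ⟨hj1, hj2⟩ := Finset.mem_filter.mp hj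
      have hjk : j ≠ k := by rintro rfl; exact hknot hj
      have hcount : t.count j = s.count j := by
        rw [ht, Multiset.count_erase_of_ne hjk]
      refine Finset.mem_filter.mpr ⟨?_, by rwa [← hcount]⟩
      rw [Multiset.mem_toFinset] at hj1 ⊢
      exact Multiset.mem_of_mem_erase (ht ▸ hj1)
  have := Finset.card_le_card hsub
  rwa [Finset.card_insert_of_notMem hknot] at this

lemma oddCnt_eq_zero {s : Multiset ℕ} (h : ∀ k ∈ s, ¬ Odd (s.count k)) :
    oddCnt s = 0 := by
  classical
  rw [oddCnt, Finset.card_eq_zero, Finset.filter_eq_empty_iff]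
  intro j hj
  exact h j (Multiset.mem_toFinset.mp hj)

lemma oddCnt_erase_le_one {s : Multiset ℕ} {k : ℕ}
    (h : ∀ j ∈ s, ¬ Odd (s.count j)) : oddCnt (s.erase k) ≤ 1 := by
  classical
  rw [oddCnt]
  refine le_trans (Finset.card_le_card (fun j hj => ?_)) (Finset.card_singleton k).le
  obtain ⟨hj1, hj2⟩ := Finset.mem_filter.mp hj
  rw [Finset.mem_singleton]
  by_contra hjk
  have : (s.erase k).count j = s.count j := Multiset.count_erase_of_ne hjk s
  rw [this] at hj2
  exact h j (Multiset.mem_of_mem_erase (Multiset.mem_toFinset.mp hj1)) hj2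

lemma oddCnt_erase_erase {s : Multiset ℕ} {k : ℕ}
    (h : ∀ j ∈ s, ¬ Odd (s.count j)) : oddCnt ((s.erase k).erase k) = 0 := by
  classical
  apply oddCnt_eq_zero
  intro j hj
  by_cases hjk : j = k
  · subst hjk
    rw [Multiset.count_erase_self, Multiset.count_erase_self]
    have hmem : j ∈ s := Multiset.mem_of_mem_erase (Multiset.mem_of_mem_erase hj)
    have := h j hmem
    rw [Nat.odd_iff] at this ⊢
    omega
  · rw [Multiset.count_erase_of_ne hjk, Multiset.count_erase_of_ne hjk]
    exact h j (Multiset.mem_of_mem_erase (Multiset.mem_of_mem_erase hj))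

lemma even_sum_of_all_even {s : Multiset ℕ} (h : ∀ j ∈ s, ¬ Odd (s.count j)) :
    2 ∣ s.sum := by
  classical
  have hmap : s.map id = s := Multiset.map_id s
  have := Finset.sum_multiset_map_count s (id : ℕ → ℕ)
  rw [hmap] at this
  rw [this]
  refine Finset.dvd_sum fun j hj => ?_
  have := h j (Multiset.mem_toFinset.mp hj)
  rw [Nat.not_odd_iff_even] at this
  obtain ⟨d, hd⟩ := this
  rw [smul_eq_mul, hd]
  exact ⟨d * id j, by ring⟩

lemma exists_blocks (c : ℕ) : ∀ (s : Multiset ℕ), Multiset.card s = c →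
    (∀ k ∈ s, k ≠ 0) → (∀ k ∈ s, Odd k) → ∀ m : ℕ,
    s.sum ≤ 2 * m + c → 2 * m + oddCnt s ≤ s.sum →
    ∃ L : List (ℕ × Bool), (∀ b ∈ L, b.1 ≠ 0 ∧ Odd b.1) ∧ LParts L = s ∧ LWeight L = m := by
  induction c using Nat.strong_induction_on with
  | _ c ih =>
    intro s hc h0 hodd m hlow hupp
    classical
    rcases Multiset.empty_or_exists_mem s with rfl | ⟨k, hk⟩
    · simp at hc
      subst hc
      simp only [Multiset.sum_zero] at hlow hupp
      have hO : oddCnt 0 = 0 := by simp [oddCnt]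
      rw [hO] at hupp
      have : m = 0 := by omega
      exact ⟨[], by simp, by simp, by simp [this]⟩
    · -- basic data about k and the erased multiset
      obtain ⟨d, hd⟩ := hodd k hk
      have hk0 := h0 k hk
      set t := s.erase k with htdef
      have hst : k ::ₘ t = s := Multiset.cons_erase hk
      have hsum_t : s.sum = k + t.sum := by rw [← hst]; simp
      have hcard_t : Multiset.card s = Multiset.card t + 1 := by rw [← hst]; simp
      have hcard_le : Multiset.card t ≤ t.sum :=
        multiset_card_le_sum t fun x hx => by
          have := h0 x (Multiset.mem_of_mem_erase hx); omega
      have hd2 : k = 2 * d + 1 := hd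
      have hdm : d ≤ m := by omega
      have h0t : ∀ x ∈ t, x ≠ 0 := fun x hx => h0 x (Multiset.mem_of_mem_erase hx)
      have hoddt : ∀ x ∈ t, Odd x := fun x hx => hodd x (Multiset.mem_of_mem_erase hx)
      by_cases hcase : ∃ j ∈ s, Odd (s.count j)
      · -- choose a part-size with odd multiplicity and use a single block on it
        obtain ⟨j, hj, hjodd⟩ := hcase
        clear hst hsum_t hcard_t hcard_le hdm htdef h0t hoddt hd2 hd hk0 hk
        obtain ⟨d, hd⟩ := hodd j hj
        have hj0 := h0 j hj
        set t := s.erase j with htdef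
        have hst : j ::ₘ t = s := Multiset.cons_erase hj
        have hsum_t : s.sum = j + t.sum := by rw [← hst]; simp
        have hcard_t : Multiset.card s = Multiset.card t + 1 := by rw [← hst]; simp
        have hcard_le : Multiset.card t ≤ t.sum :=
          multiset_card_le_sum t fun x hx => by
            have := h0 x (Multiset.mem_of_mem_erase hx); omega
        have hO := oddCnt_erase_of_odd hj hjodd
        rw [← htdef] at hO
        obtain ⟨L, hL1, hL2, hL3⟩ := ih (Multiset.card t) (by omega) t rfl
          (fun x hx => h0 x (Multiset.mem_of_mem_erase hx))
          (fun x hx => hodd x (Multiset.mem_of_mem_erase hx))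
          (m - d) (by omega) (by omega)
        refine ⟨(j, false) :: L, ?_, ?_, ?_⟩
        · intro b hb
          rcases List.mem_cons.mp hb with rfl | hb
          · exact ⟨hj0, hodd j hj⟩
          · exact hL1 b hb
        · rw [LParts_cons, hL2, bParts, Multiset.singleton_add, hst]
        · rw [LWeight_cons, hL3, bWeight]
          omega
      · -- all multiplicities are even
        push_neg at hcase
        have hOzero : oddCnt s = 0 := oddCnt_eq_zero fun j hj hodd' => hcase j hj hodd'
        rw [hOzero] at hupp
        have hkcount : 2 ≤ s.count k := by
          have h1 : 1 ≤ s.count k := Multiset.count_pos.mpr hk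
          have := hcase k hk
          rw [Nat.not_odd_iff_even] at this
          obtain ⟨e, he⟩ := this
          omega
        by_cases hsub : 2 * m + 2 ≤ s.sum
        · -- single block still fits
          have hO1 : oddCnt t ≤ 1 := oddCnt_erase_le_one fun j hj h' => hcase j hj h'
          obtain ⟨L, hL1, hL2, hL3⟩ := ih (Multiset.card t) (by omega) t rfl h0t hoddt
            (m - d) (by omega) (by omega)
          refine ⟨(k, false) :: L, ?_, ?_, ?_⟩
          · intro b hb
            rcases List.mem_cons.mp hb with rfl | hb
            · exact ⟨hk0, hodd k hk⟩
            · exact hL1 b hb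
          · rw [LParts_cons, hL2, bParts, Multiset.singleton_add, hst]
          · rw [LWeight_cons, hL3, bWeight]
            omega
        · -- here 2*m = s.sum; use a pair block
          have heven := even_sum_of_all_even fun j hj h' => hcase j hj h'
          have hS : s.sum = 2 * m := by omega
          have hkt : k ∈ t := by
            rw [htdef, ← Multiset.count_pos, Multiset.count_erase_self]
            omega
          set u := t.erase k with hudef
          have htu : k ::ₘ u = t := Multiset.cons_erase hkt
          have hsum_u : t.sum = k + u.sum := by rw [← htu]; simp
          have hcard_u : Multiset.card t = Multiset.card u + 1 := by rw [← htu]; simp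
          have hOu : oddCnt u = 0 := by
            rw [hudef, htdef]
            exact oddCnt_erase_erase fun j hj h' => hcase j hj h'
          have hkm : k ≤ m := by omega
          obtain ⟨L, hL1, hL2, hL3⟩ := ih (Multiset.card u) (by omega) u rfl
            (fun x hx => h0t x (Multiset.mem_of_mem_erase hx))
            (fun x hx => hoddt x (Multiset.mem_of_mem_erase hx))
            (m - k) (by omega) (by omega)
          refine ⟨(k, true) :: L, ?_, ?_, ?_⟩
          · intro b hb
            rcases List.mem_cons.mp hb with rfl | hb
            · exact ⟨hk0, hodd k hk⟩
            · exact hL1 b hb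
          · rw [LParts_cons, hL2, bParts]
            have : ({k, k} : Multiset ℕ) + u = k ::ₘ k ::ₘ u := by
              rw [Multiset.insert_eq_cons, Multiset.cons_add, Multiset.singleton_add]
            rw [this, htu, hst]
          · rw [LWeight_cons, hL3, bWeight]
            omega

end Comb
/-- Let `λ` be a partition of `n` with all parts odd and let `σ ∈ S_n` have cycle type `λ`.
Then for every integer `m` with `(n − ℓ(λ))/2 ≤ m ≤ (n − m_o(λ))/2` there is a permutation
`π ∈ S_n` which is a product of exactly `m` pairwise disjoint transpositions (the identity
if `m = 0`) such that `π σ π⁻¹ = σ⁻¹`. -/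
theorem exists_involution_inverting {n : ℕ} (l : Nat.Partition n)
    (hodd : ∀ i ∈ l.parts, Odd i)
    (σ : Equiv.Perm (Fin n)) (hσ : σ.hasCycleType l) :
    ∀ m : ℕ, ((n : ℚ) - l.length) / 2 ≤ m → (m : ℚ) ≤ ((n : ℚ) - l.oddMultCount) / 2 →
      ∃ π : Equiv.Perm (Fin n), π.cycleType = Multiset.replicate m 2 ∧ π * σ * π⁻¹ = σ⁻¹ := by
  intro m h1 h2
  classical
  have hn : l.parts.sum = n := l.parts_sum
  have hpos : ∀ k ∈ l.parts, k ≠ 0 := fun k hk => (l.parts_pos hk).ne'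
  -- convert the rational bounds into natural-number inequalities
  have hlow : l.parts.sum ≤ 2 * m + Multiset.card l.parts := by
    rw [div_le_iff₀ (by norm_num : (0:ℚ) < 2)] at h1
    have : (n : ℚ) ≤ 2 * m + l.length := by linarith
    have h' : n ≤ 2 * m + l.length := by exact_mod_cast this
    rw [hn]
    exact h'
  have hupp : 2 * m + oddCnt l.parts ≤ l.parts.sum := by
    rw [le_div_iff₀ (by norm_num : (0:ℚ) < 2)] at h2
    have : 2 * (m : ℚ) + l.oddMultCount ≤ n := by linarith
    have h' : 2 * m + l.oddMultCount ≤ n := by exact_mod_cast this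
    rw [hn]
    exact h'
  -- build the block decomposition and its model
  obtain ⟨L, hL1, hL2, hL3⟩ := exists_blocks (Multiset.card l.parts) l.parts rfl hpos hodd m
    hlow hupp
  obtain ⟨I⟩ := list_model L hL1
  rw [hL2, hL3, hn] at I
  -- conjugate the model onto σ
  have hσ0 : I.σ.cycleType = σ.cycleType := by
    rw [I.hσ, hσ]
  have hconj : IsConj I.σ σ := Equiv.Perm.isConj_iff_cycleType_eq.mpr hσ0
  rw [isConj_iff] at hconj
  obtain ⟨τ, hτ⟩ := hconj
  subst hτ
  refine ⟨τ * I.π * τ⁻¹, ?_, ?_⟩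
  · rw [Equiv.Perm.cycleType_conj, I.hπ]
  · have key := I.hc
    calc (τ * I.π * τ⁻¹) * (τ * I.σ * τ⁻¹) * (τ * I.π * τ⁻¹)⁻¹
        = τ * (I.π * I.σ * I.π⁻¹) * τ⁻¹ := by group
      _ = τ * I.σ⁻¹ * τ⁻¹ := by rw [key]
      _ = (τ * I.σ * τ⁻¹)⁻¹ := by group
end

section
/- Let μ be a partition of n with distinct parts, let t be a μ-tableau, and let π ∈ S_n be an involution (π² = 1, π ≠ 1). Then ⟨π·e_t, e_t⟩ ≡ #{T ∈ supp(πt) ∩ supp(t) : π·T = T} (mod 2). -/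
noncomputable section
open scoped Classical

/-- The cells of the Young diagram of a partition `μ` (given as a list of parts):
pairs of a row index `r` and a column index `c < μ_r`. -/
abbrev YoungCell (μ : List ℕ) := (r : Fin μ.length) × Fin (μ.get r)

/-- A `μ`-tableau: a bijective filling of the Young diagram of `μ` with the symbols
`1, …, n` (here: the elements of `Fin n`). -/
abbrev YoungTableau (n : ℕ) (μ : List ℕ) := YoungCell μ ≃ Fin n

/-- A family of rows is a `μ`-tabloid: row `r` has `μ_r` elements, the rows are pairwise
disjoint and cover `{1, …, n}`. -/
def IsTabloid (n : ℕ) (μ : List ℕ) (R : Fin μ.length → Finset (Fin n)) : Prop :=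
  (∀ r, (R r).card = μ.get r) ∧
  (∀ r s, r ≠ s → Disjoint (R r) (R s)) ∧
  (∀ i, ∃ r, i ∈ R r)

/-- A `μ`-tabloid: an ordered partition of `{1, …, n}` with block sizes `μ₁, …, μ_ℓ`. -/
def Tabloid (n : ℕ) (μ : List ℕ) := {R : Fin μ.length → Finset (Fin n) // IsTabloid n μ R}

variable {n : ℕ} {μ : List ℕ}

/-- The action of a permutation on a tabloid, applying it to each row. -/
def permTabloid (π : Equiv.Perm (Fin n)) (R : Tabloid n μ) : Tabloid n μ :=
  ⟨fun r => (R.1 r).image π, by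
    obtain ⟨h1, h2, h3⟩ := R.2
    refine ⟨fun r => ?_, fun r s hrs => ?_, fun i => ?_⟩
    · rw [Finset.card_image_of_injective _ π.injective, h1 r]
    · exact (Finset.disjoint_image π.injective).mpr (h2 r s hrs)
    · obtain ⟨r, hr⟩ := h3 (π⁻¹ i)
      exact ⟨r, Finset.mem_image.mpr ⟨π⁻¹ i, hr, by simp⟩⟩⟩

/-- The action of a permutation on a tableau (postcomposition). -/
def permTableau (π : Equiv.Perm (Fin n)) (t : YoungTableau n μ) : YoungTableau n μ :=
  t.trans π

/-- The tabloid `{t}` determined by a tableau `t`: its `r`-th row is the set of entries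
in the `r`-th row of `t`. -/
def tabloidOf (t : YoungTableau n μ) : Tabloid n μ :=
  ⟨fun r => Finset.univ.image fun c : Fin (μ.get r) => t ⟨r, c⟩, by
    refine ⟨fun r => ?_, fun r s hrs => ?_, fun i => ?_⟩
    · rw [Finset.card_image_of_injective, Finset.card_univ, Fintype.card_fin]
      intro c₁ c₂ h
      have := t.injective h
      exact (Sigma.mk.inj_iff.mp this).2.eq
    · rw [Finset.disjoint_left]
      rintro a ha hb
      obtain ⟨c₁, -, h₁⟩ := Finset.mem_image.mp ha
      obtain ⟨c₂, -, h₂⟩ := Finset.mem_image.mp hb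
      have := t.injective (h₁.trans h₂.symm)
      exact hrs (Sigma.mk.inj_iff.mp this).1
    · refine ⟨(t.symm i).1,
        Finset.mem_image.mpr ⟨(t.symm i).2, Finset.mem_univ _, ?_⟩⟩
      exact t.apply_symm_apply i⟩

/-- The (index of the) row of a tableau containing a given symbol. -/
def rowIdx (t : YoungTableau n μ) (i : Fin n) : ℕ :=
  ((t.symm i).1 : ℕ)

/-- The (index of the) column of a tableau containing a given symbol. -/
def colIdx (t : YoungTableau n μ) (i : Fin n) : ℕ :=
  ((t.symm i).2 : ℕ)

/-- The column stabilizer `C_t` of a tableau: the permutations preserving each column. -/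
def colStab (t : YoungTableau n μ) : Finset (Equiv.Perm (Fin n)) :=
  Finset.univ.filter fun σ => ∀ i, colIdx t (σ i) = colIdx t i

/-- Membership in the row stabilizer `R_t` of a tableau. -/
def memRowStab (t : YoungTableau n μ) (π : Equiv.Perm (Fin n)) : Prop :=
  ∀ i, rowIdx t (π i) = rowIdx t i

/-- The polytabloid `e_t = Σ_{σ ∈ C_t} sgn(σ)·{σt}` of a tableau `t`, an element of the
free `ℤ`-module `M^μ` on the `μ`-tabloids. -/
def polytabloid (t : YoungTableau n μ) : Tabloid n μ →₀ ℤ :=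
  ∑ σ ∈ colStab t, ((Equiv.Perm.sign σ : ℤˣ) : ℤ) • Finsupp.single (tabloidOf (permTableau σ t)) 1

/-- The symmetric bilinear form on `M^μ` making the tabloids orthonormal. -/
def tabForm (x y : Tabloid n μ →₀ ℤ) : ℤ :=
  x.sum fun T a => a * y T

/-- The action of a permutation on `M^μ`, permuting the tabloid basis. -/
def permMap (π : Equiv.Perm (Fin n)) (x : Tabloid n μ →₀ ℤ) : Tabloid n μ →₀ ℤ :=
  Finsupp.mapDomain (permTabloid π) x

/-- `supp(t)`: the set of tabloids `{σt}` for `σ ∈ C_t`. -/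
def tabSupp (t : YoungTableau n μ) : Finset (Tabloid n μ) :=
  (colStab t).image fun σ => tabloidOf (permTableau σ t)

noncomputable instance : Fintype (Tabloid n μ) := by unfold Tabloid; infer_instance

lemma permTableau_mul (σ τ : Equiv.Perm (Fin n)) (t : YoungTableau n μ) :
    permTableau σ (permTableau τ t) = permTableau (σ * τ) t := rfl

lemma permTableau_one (t : YoungTableau n μ) : permTableau 1 t = t :=
  Equiv.trans_refl t

lemma symm_permTableau (π : Equiv.Perm (Fin n)) (t : YoungTableau n μ) (i : Fin n) :
    (permTableau π t).symm i = t.symm (π⁻¹ i) := rfl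

lemma colIdx_permTableau (π : Equiv.Perm (Fin n)) (t : YoungTableau n μ) (i : Fin n) :
    colIdx (permTableau π t) i = colIdx t (π⁻¹ i) := rfl

lemma cell_ext {a b : YoungCell μ} (h1 : (a.1 : ℕ) = (b.1 : ℕ)) (h2 : (a.2 : ℕ) = (b.2 : ℕ)) :
    a = b := by
  obtain ⟨⟨a1, ha⟩, a2⟩ := a
  obtain ⟨⟨b1, hb⟩, b2⟩ := b
  simp only at h1
  subst h1
  simp only [Sigma.mk.inj_iff, heq_eq_eq, true_and]
  exact Fin.ext h2

lemma mem_tabloidOf_iff (t : YoungTableau n μ) (r : Fin μ.length) (i : Fin n) :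
    i ∈ (tabloidOf t).1 r ↔ (t.symm i).1 = r := by
  simp only [tabloidOf, Finset.mem_image, Finset.mem_univ, true_and]
  constructor
  · rintro ⟨c, rfl⟩
    simp
  · intro h
    refine ⟨h ▸ (t.symm i).2, ?_⟩
    rw [show (⟨r, h ▸ (t.symm i).2⟩ : YoungCell μ) = t.symm i by
      exact (cell_ext (by simp [h]) (by subst h; rfl)).symm]
    exact t.apply_symm_apply i

lemma tabloidOf_eq_iff {t t' : YoungTableau n μ} :
    tabloidOf t = tabloidOf t' ↔ ∀ i, (t.symm i).1 = (t'.symm i).1 := by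
  constructor
  · intro h i
    have : i ∈ (tabloidOf t').1 ((t.symm i).1) := by
      rw [← h, mem_tabloidOf_iff]
    exact ((mem_tabloidOf_iff t' _ i).mp this).symm
  · intro h
    apply Subtype.ext
    funext r
    ext i
    rw [mem_tabloidOf_iff, mem_tabloidOf_iff, h i]

lemma permTabloid_tabloidOf (π : Equiv.Perm (Fin n)) (t : YoungTableau n μ) :
    permTabloid π (tabloidOf t) = tabloidOf (permTableau π t) := by
  apply Subtype.ext
  funext r
  simp [permTabloid, tabloidOf, Finset.image_image, permTableau]
  rfl

lemma permTabloid_mul (σ τ : Equiv.Perm (Fin n)) (R : Tabloid n μ) :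
    permTabloid σ (permTabloid τ R) = permTabloid (σ * τ) R := by
  apply Subtype.ext
  funext r
  simp [permTabloid, Finset.image_image]

lemma permTabloid_one (R : Tabloid n μ) : permTabloid 1 R = R := by
  apply Subtype.ext
  funext r
  simp [permTabloid]

lemma mem_colStab {t : YoungTableau n μ} {σ : Equiv.Perm (Fin n)} :
    σ ∈ colStab t ↔ ∀ i, colIdx t (σ i) = colIdx t i := by
  simp [colStab]

lemma conj_mem_colStab {t : YoungTableau n μ} {σ : Equiv.Perm (Fin n)}
    (π : Equiv.Perm (Fin n)) (h : σ ∈ colStab t) :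
    π * σ * π⁻¹ ∈ colStab (permTableau π t) := by
  rw [mem_colStab] at h ⊢
  intro i
  rw [colIdx_permTableau, colIdx_permTableau]
  simpa using h (π⁻¹ i)

lemma tabloidOf_injOn (t : YoungTableau n μ) {σ τ : Equiv.Perm (Fin n)}
    (hσ : σ ∈ colStab t) (hτ : τ ∈ colStab t)
    (h : tabloidOf (permTableau σ t) = tabloidOf (permTableau τ t)) : σ = τ := by
  rw [mem_colStab] at hσ hτ
  rw [tabloidOf_eq_iff] at h
  apply Equiv.ext
  intro i
  set j := σ i with hj
  have hrow : (t.symm (τ⁻¹ j)).1 = (t.symm i).1 := by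
    have h1 := h j
    rw [symm_permTableau, symm_permTableau] at h1
    rw [← h1, hj]
    simp
  have hcol : colIdx t (τ⁻¹ j) = colIdx t i := by
    have h1 : colIdx t (τ (τ⁻¹ j)) = colIdx t (τ⁻¹ j) := hτ _
    simp only [show τ (τ⁻¹ j) = j from τ.apply_symm_apply j] at h1
    rw [← h1, hj, hσ i]
  have : t.symm (τ⁻¹ j) = t.symm i :=
    cell_ext (by exact_mod_cast congrArg Fin.val hrow) hcol
  have := t.symm.injective this
  calc σ i = j := rfl
    _ = τ i := by rw [← this]; simp

lemma sign_cast_zmod (σ : Equiv.Perm (Fin n)) :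
    (((Equiv.Perm.sign σ : ℤˣ) : ℤ) : ZMod 2) = 1 := by
  rcases Int.units_eq_one_or (Equiv.Perm.sign σ) with h | h <;> rw [h] <;> decide

lemma mem_tabSupp {t : YoungTableau n μ} {T : Tabloid n μ} :
    T ∈ tabSupp t ↔ ∃ σ ∈ colStab t, tabloidOf (permTableau σ t) = T := by
  simp [tabSupp]

lemma polytabloid_apply_zmod (t : YoungTableau n μ) (T : Tabloid n μ) :
    (((polytabloid t) T : ℤ) : ZMod 2) = if T ∈ tabSupp t then 1 else 0 := by
  rw [polytabloid, Finsupp.finset_sum_apply, Int.cast_sum]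
  have : ∀ σ ∈ colStab t,
      (((((Equiv.Perm.sign σ : ℤˣ) : ℤ) •
          Finsupp.single (tabloidOf (permTableau σ t)) (1 : ℤ)) T : ℤ) : ZMod 2)
        = if tabloidOf (permTableau σ t) = T then 1 else 0 := by
    intro σ _
    rw [Finsupp.smul_apply, Finsupp.single_apply, smul_eq_mul, Int.cast_mul, sign_cast_zmod,
      one_mul]
    split <;> simp
  rw [Finset.sum_congr rfl this, Finset.sum_boole]
  by_cases hT : T ∈ tabSupp t
  · obtain ⟨σ₀, hσ₀, hσ₀T⟩ := mem_tabSupp.mp hT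
    rw [if_pos hT]
    have heq : (colStab t).filter (fun σ => tabloidOf (permTableau σ t) = T) = {σ₀} := by
      ext σ
      simp only [Finset.mem_filter, Finset.mem_singleton]
      constructor
      · rintro ⟨hσ, hσT⟩
        exact tabloidOf_injOn t hσ hσ₀ (hσT.trans hσ₀T.symm)
      · rintro rfl; exact ⟨hσ₀, hσ₀T⟩
    rw [heq]; simp
  · rw [if_neg hT]
    have heq : (colStab t).filter (fun σ => tabloidOf (permTableau σ t) = T) = ∅ := by
      rw [Finset.filter_eq_empty_iff]
      intro σ hσ hσT
      exact hT (mem_tabSupp.mpr ⟨σ, hσ, hσT⟩)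
    rw [heq]; simp


lemma permTabloid_mem_tabSupp (π : Equiv.Perm (Fin n)) {t : YoungTableau n μ} {T : Tabloid n μ}
    (h : T ∈ tabSupp t) : permTabloid π T ∈ tabSupp (permTableau π t) := by
  obtain ⟨σ, hσ, rfl⟩ := mem_tabSupp.mp h
  refine mem_tabSupp.mpr ⟨π * σ * π⁻¹, conj_mem_colStab π hσ, ?_⟩
  rw [permTabloid_tabloidOf, permTableau_mul, permTableau_mul]
  congr 2
  group

lemma permMap_polytabloid (π : Equiv.Perm (Fin n)) (t : YoungTableau n μ) :
    permMap π (polytabloid t) = polytabloid (permTableau π t) := by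
  rw [permMap, polytabloid, polytabloid, ← Finsupp.mapDomain.addMonoidHom_apply, map_sum]
  refine Finset.sum_nbij' (fun σ => π * σ * π⁻¹) (fun ρ => π⁻¹ * ρ * π)
    (fun σ hσ => conj_mem_colStab π hσ) (fun ρ hρ => ?_) (fun σ _ => by group)
    (fun ρ _ => by group) (fun σ hσ => ?_)
  · have := conj_mem_colStab (t := permTableau π t) π⁻¹ hρ
    rw [permTableau_mul, inv_mul_cancel, permTableau_one] at this
    simpa using this
  · rw [Finsupp.mapDomain.addMonoidHom_apply, Finsupp.mapDomain_smul,
      Finsupp.mapDomain_single, permTabloid_tabloidOf, permTableau_mul, permTableau_mul]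
    have h1 : Equiv.Perm.sign (π * σ * π⁻¹) = Equiv.Perm.sign σ := by
      simp [mul_comm]
      rw [← mul_assoc, Int.units_mul_self, one_mul]
    have h2 : π * σ * π⁻¹ * π = π * σ := by group
    rw [h1, h2]

lemma permTabloid_involutive {π : Equiv.Perm (Fin n)} (hπ : π ^ 2 = 1) (T : Tabloid n μ) :
    permTabloid π (permTabloid π T) = T := by
  rw [permTabloid_mul, ← sq, hπ, permTabloid_one]

/-- Let `μ` be a partition of `n` with distinct parts, `t` a `μ`-tableau and `π ∈ S_n` an
involution.  Then `⟨π·e_t, e_t⟩ ≡ #{T ∈ supp(πt) ∩ supp(t) : π·T = T} (mod 2)`. -/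
theorem tabForm_polytabloid_modEq_card_fixed
    (hpos : ∀ i ∈ μ, 0 < i) (hdist : μ.Chain' (· > ·)) (hsum : μ.sum = n)
    (t : YoungTableau n μ) (π : Equiv.Perm (Fin n)) (hπ : π ^ 2 = 1) (hπ1 : π ≠ 1) :
    tabForm (permMap π (polytabloid t)) (polytabloid t)
      ≡ (((tabSupp (permTableau π t) ∩ tabSupp t).filter
            fun T => permTabloid π T = T).card : ℤ) [ZMOD 2] := by
  rw [permMap_polytabloid]
  suffices h : ((tabForm (polytabloid (permTableau π t)) (polytabloid t) : ℤ) : ZMod 2)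
      = ((((tabSupp (permTableau π t) ∩ tabSupp t).filter
            fun T => permTabloid π T = T).card : ℤ) : ZMod 2) by
    have h2 := (ZMod.intCast_eq_intCast_iff _ _ 2).mp h
    exact_mod_cast h2
  set s := permTableau π t with hs
  set S := tabSupp s ∩ tabSupp t with hS
  have hform : tabForm (polytabloid s) (polytabloid t)
      = ∑ T : Tabloid n μ, (polytabloid s) T * (polytabloid t) T := by
    rw [tabForm, Finsupp.sum_fintype]
    intro T; ring
  have hmaps : ∀ T ∈ S, permTabloid π T ∈ S := by
    intro T hT
    rw [hS, Finset.mem_inter] at hT ⊢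
    constructor
    · exact hs ▸ permTabloid_mem_tabSupp π hT.2
    · have := permTabloid_mem_tabSupp π (hs ▸ hT.1)
      rwa [permTableau_mul, ← sq, hπ, permTableau_one] at this
  have hcard : ((S.card : ℕ) : ZMod 2)
      = (((S.filter fun T => permTabloid π T = T).card : ℕ) : ZMod 2) := by
    rw [← Finset.card_filter_add_card_filter_not
      (s := S) (p := fun T => permTabloid π T = T), Nat.cast_add]
    have h0 : ∑ T ∈ S.filter (fun T => ¬ permTabloid π T = T), (1 : ZMod 2) = 0 := by
      refine Finset.sum_involution (fun T _ => permTabloid π T) (fun a ha => by decide)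
        (fun a ha _ => (Finset.mem_filter.mp ha).2) (fun a ha => ?_)
        (fun a ha => permTabloid_involutive hπ a)
      simp only [Finset.mem_filter] at ha ⊢
      refine ⟨hmaps a ha.1, fun hfix => ha.2 ?_⟩
      have h2 : permTabloid π (permTabloid π a) = a := permTabloid_involutive hπ a
      rw [h2] at hfix
      exact hfix.symm
    rw [Finset.sum_const, nsmul_eq_mul, mul_one] at h0
    rw [h0, add_zero]
  have hterm : ∀ T : Tabloid n μ,
      (((polytabloid s) T : ℤ) : ZMod 2) * (((polytabloid t) T : ℤ) : ZMod 2)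
        = if T ∈ S then 1 else 0 := by
    intro T
    rw [polytabloid_apply_zmod, polytabloid_apply_zmod, hS]
    by_cases h1 : T ∈ tabSupp s <;> by_cases h2 : T ∈ tabSupp t <;>
      simp [h1, h2, Finset.mem_inter]
  calc ((tabForm (polytabloid s) (polytabloid t) : ℤ) : ZMod 2)
      = ∑ T : Tabloid n μ,
          (((polytabloid s) T : ℤ) : ZMod 2) * (((polytabloid t) T : ℤ) : ZMod 2) := by
        rw [hform, Int.cast_sum]
        exact Finset.sum_congr rfl fun T _ => Int.cast_mul _ _
    _ = ∑ T : Tabloid n μ, if T ∈ S then (1 : ZMod 2) else 0 :=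
        Finset.sum_congr rfl fun T _ => hterm T
    _ = ((S.card : ℕ) : ZMod 2) := by
        rw [Finset.sum_boole]
        congr 1
        simp
    _ = (((S.filter fun T => permTabloid π T = T).card : ℕ) : ZMod 2) := hcard
    _ = ((((S.filter fun T => permTabloid π T = T).card : ℤ)) : ZMod 2) := by push_cast; rfl

end
end

section
/- Let μ be a partition of n with distinct parts, let t be a μ-tableau, and let π ∈ S_n be an involution (π² = 1, π ≠ 1). If ⟨π·e_t, e_t⟩ is odd, then there exists σ ∈ C_t such that π belongs to the row stabilizer R_{σt}. -/
noncomputable section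
open scoped Classical

variable {n : ℕ} {μ : List ℕ}

section Aux

variable {n : ℕ} {μ : List ℕ}

lemma tabForm_single_left (A : Tabloid n μ) (a : ℤ) (y : Tabloid n μ →₀ ℤ) :
    tabForm (Finsupp.single A a) y = a * y A := by
  unfold tabForm
  rw [Finsupp.sum_single_index]
  simp

lemma tabForm_sum_left {ι : Type*} (s : Finset ι) (f : ι → Tabloid n μ →₀ ℤ)
    (y : Tabloid n μ →₀ ℤ) :
    tabForm (∑ i ∈ s, f i) y = ∑ i ∈ s, tabForm (f i) y := by
  unfold tabForm
  exact (Finsupp.sum_finsetSum_index (fun T => by simp) (fun T x y => by ring)).symm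

lemma mem_tabloidOf_self (s : YoungTableau n μ) (i : Fin n) :
    i ∈ (tabloidOf s).1 (s.symm i).1 := by
  refine Finset.mem_image.mpr ⟨(s.symm i).2, Finset.mem_univ _, ?_⟩
  rw [Sigma.eta]
  exact s.apply_symm_apply i

lemma row_eq_of_mem (s : YoungTableau n μ) (i : Fin n) (r : Fin μ.length)
    (h : i ∈ (tabloidOf s).1 r) : (s.symm i).1 = r := by
  by_contra hne
  exact Finset.disjoint_left.mp ((tabloidOf s).2.2.1 _ _ hne) (mem_tabloidOf_self s i) h

lemma memRowStab_of_fixed (s : YoungTableau n μ) (π : Equiv.Perm (Fin n))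
    (h : permTabloid π (tabloidOf s) = tabloidOf s) : memRowStab s π := by
  intro i
  have hrow : ∀ r, ((tabloidOf s).1 r).image π = (tabloidOf s).1 r := fun r =>
    congrFun (congrArg Subtype.val h) r
  have hi : π i ∈ (tabloidOf s).1 (s.symm i).1 := by
    rw [← hrow]
    exact Finset.mem_image_of_mem π (mem_tabloidOf_self s i)
  have := row_eq_of_mem s (π i) _ hi
  unfold rowIdx
  rw [this]

lemma permTabloid_invol (π : Equiv.Perm (Fin n)) (hπ : π ^ 2 = 1) (R : Tabloid n μ) :
    permTabloid π (permTabloid π R) = R := by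
  apply Subtype.ext
  funext r
  show ((R.1 r).image π).image π = R.1 r
  rw [Finset.image_image]
  have : π ∘ π = id := by
    funext i
    have := Equiv.Perm.ext_iff.mp hπ i
    simpa [pow_succ, Equiv.Perm.mul_apply] using this
  rw [this, Finset.image_id]

end Aux

/-- Let `μ` be a partition of `n` with distinct parts, `t` a `μ`-tableau and `π ∈ S_n` an
involution.  If `⟨π·e_t, e_t⟩` is odd then `π` belongs to the row stabilizer `R_{σt}` for
some `σ ∈ C_t`. -/
theorem mem_rowStab_of_odd_tabForm
    (hpos : ∀ i ∈ μ, 0 < i) (hdist : μ.Chain' (· > ·)) (hsum : μ.sum = n)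
    (t : YoungTableau n μ) (π : Equiv.Perm (Fin n)) (hπ : π ^ 2 = 1) (hπ1 : π ≠ 1)
    (hodd : Odd (tabForm (permMap π (polytabloid t)) (polytabloid t))) :
    ∃ σ ∈ colStab t, memRowStab (permTableau σ t) π := by
  classical
  set T : Equiv.Perm (Fin n) → Tabloid n μ := fun σ => tabloidOf (permTableau σ t) with hTdef
  set ε : Equiv.Perm (Fin n) → ℤ := fun σ => ((Equiv.Perm.sign σ : ℤˣ) : ℤ) with hεdef
  have hpt : polytabloid t = ∑ σ ∈ colStab t, Finsupp.single (T σ) (ε σ) := by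
    unfold polytabloid
    refine Finset.sum_congr rfl fun σ _ => ?_
    rw [Finsupp.smul_single, smul_eq_mul, mul_one]
  have hpm : permMap π (polytabloid t)
      = ∑ σ ∈ colStab t, Finsupp.single (permTabloid π (T σ)) (ε σ) := by
    rw [hpt]
    unfold permMap
    rw [Finsupp.mapDomain_finset_sum]
    exact Finset.sum_congr rfl fun σ _ => Finsupp.mapDomain_single
  have hval : tabForm (permMap π (polytabloid t)) (polytabloid t)
      = ∑ σ ∈ colStab t, ∑ τ ∈ colStab t,
          ε σ * (if T τ = permTabloid π (T σ) then ε τ else 0) := by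
    rw [hpm, tabForm_sum_left]
    refine Finset.sum_congr rfl fun σ _ => ?_
    rw [tabForm_single_left, hpt, Finsupp.finset_sum_apply, Finset.mul_sum]
    refine Finset.sum_congr rfl fun τ _ => ?_
    rw [Finsupp.single_apply]
  have hsign : ∀ ρ : Equiv.Perm (Fin n), ((ε ρ : ℤ) : ZMod 2) = 1 := by
    intro ρ
    rcases Int.units_eq_one_or (Equiv.Perm.sign ρ) with h | h <;>
      simp [hεdef, h] <;> decide
  have hcast : ((tabForm (permMap π (polytabloid t)) (polytabloid t) : ℤ) : ZMod 2)
      = ∑ σ ∈ colStab t, ∑ τ ∈ colStab t,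
          (if T τ = permTabloid π (T σ) then (1 : ZMod 2) else 0) := by
    rw [hval]
    push_cast
    refine Finset.sum_congr rfl fun σ _ => Finset.sum_congr rfl fun τ _ => ?_
    rw [hsign σ, hsign τ, one_mul]
  have hone : ((tabForm (permMap π (polytabloid t)) (polytabloid t) : ℤ) : ZMod 2) = 1 := by
    obtain ⟨k, hk⟩ := hodd
    rw [hk]
    push_cast
    rw [show (2 : ZMod 2) = 0 from rfl]
    ring
  by_contra hcon
  push_neg at hcon
  have hzero : (∑ p ∈ (colStab t) ×ˢ (colStab t),
      (if T p.2 = permTabloid π (T p.1) then (1 : ZMod 2) else 0)) = 0 := by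
    rw [← Finset.sum_filter]
    refine Finset.sum_involution (fun p _ => (p.2, p.1)) ?_ ?_ ?_ ?_
    · intro p hp; decide
    · intro p hp hne
      simp only [Finset.mem_filter, Finset.mem_product] at hp
      obtain ⟨⟨h1, h2⟩, heq⟩ := hp
      intro hswap
      have hps : p.1 = p.2 := (congrArg Prod.snd hswap)
      rw [← hps] at heq
      exact hcon p.1 h1 (memRowStab_of_fixed _ π heq.symm)
    · intro p hp
      simp only [Finset.mem_filter, Finset.mem_product] at hp ⊢
      obtain ⟨⟨h1, h2⟩, heq⟩ := hp
      refine ⟨⟨h2, h1⟩, ?_⟩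
      rw [heq, permTabloid_invol π hπ]
    · intro p hp
      rfl
  rw [Finset.sum_product' (f := fun σ τ =>
      (if T τ = permTabloid π (T σ) then (1 : ZMod 2) else 0))] at hzero
  rw [hcast] at hone
  rw [hzero] at hone
  exact one_ne_zero hone.symm

end
end

section
/- Let μ be a partition of n with distinct parts, let t be a μ-tableau, and let π ∈ S_n be an m-involution (m ≥ 1) such that ⟨π·e_t, e_t⟩ is odd. Then m ≥ (n − |μ|_a)/2; equivalently, m ≥ Σ_{j≥1} μ_{2j}. -/
noncomputable section
open scoped Classical

variable {n : ℕ} {μ : List ℕ}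

namespace OddCore

/-- partner of a value: pairs (0,1),(2,3),… -/
def psw (v : ℕ) : ℕ := if v % 2 = 0 then v + 1 else v - 1

lemma psw_psw (v : ℕ) : psw (psw v) = v := by
  unfold psw; rcases Nat.even_or_odd v with h | h
  · have hv : v % 2 = 0 := Nat.even_iff.mp h
    simp [hv, Nat.add_mod]
  · have hv : v % 2 = 1 := Nat.odd_iff.mp h
    have : ¬ (v % 2 = 0) := by omega
    simp only [this, if_false]
    have h2 : (v - 1) % 2 = 0 := by omega
    simp [h2]; omega

lemma psw_ne (v : ℕ) : psw v ≠ v := by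
  unfold psw; rcases Nat.even_or_odd v with h | h
  · have hv : v % 2 = 0 := Nat.even_iff.mp h; simp [hv]
  · have hv : v % 2 = 1 := Nat.odd_iff.mp h
    have : ¬ (v % 2 = 0) := by omega
    simp [this]; omega

variable {N : ℕ} (π : Equiv.Perm (Fin N)) (col : Fin N → ℕ) (L : ℕ → ℕ)

/-- the solution predicate -/
def Pred (ρ : Fin N → Fin N) : Prop :=
  (∀ x, ((ρ (π x) : ℕ)) = (ρ x : ℕ)) ∧
  ∀ c, Set.BijOn (fun x => ((ρ x : ℕ))) {x | col x = c} (Set.Iio (L c))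

variable {π col L}

/-- the column partner of `x` (the symbol in the same column whose value is `psw` of
`x`'s value), or `x` itself if there is none. -/
def mate (ρ : Fin N → Fin N) (x : Fin N) : Fin N :=
  if h : ∃ y, col y = col x ∧ (ρ y : ℕ) = psw (ρ x) then h.choose else x

lemma mate_col (ρ : Fin N → Fin N) (x : Fin N) : col (mate (col := col) ρ x) = col x := by
  unfold mate; split
  · next h => exact h.choose_spec.1
  · rfl

lemma mate_val {ρ : Fin N → Fin N} {x : Fin N} (h : mate (col := col) ρ x ≠ x) :
    (ρ (mate (col := col) ρ x) : ℕ) = psw (ρ x) := by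
  unfold mate at *; split at h
  · next hh =>
    simpa [mate, hh] using hh.choose_spec.2
  · exact absurd rfl h

lemma mate_ne_iff {ρ : Fin N → Fin N} (hρ : Pred π col L ρ) (x : Fin N) :
    mate (col := col) ρ x ≠ x ↔ psw (ρ x : ℕ) < L (col x) := by
  constructor
  · intro h
    have hv := mate_val h
    have := (hρ.2 (col x)).1 (show mate (col := col) ρ x ∈ {y | col y = col x} from mate_col (col := col) ρ x)
    simpa [hv] using this
  · intro h
    obtain ⟨y, hy, hyv⟩ := (hρ.2 (col x)).2.2 (Set.mem_Iio.mpr h)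
    have hex : ∃ y, col y = col x ∧ (ρ y : ℕ) = psw (ρ x) := ⟨y, hy, hyv⟩
    unfold mate; rw [dif_pos hex]
    intro heq
    have := hex.choose_spec.2
    rw [heq] at this
    exact psw_ne _ this.symm

lemma mate_eq_self {ρ : Fin N → Fin N} (hρ : Pred π col L ρ) {x : Fin N}
    (h : mate (col := col) ρ x = x) : ¬ psw (ρ x : ℕ) < L (col x) := by
  intro hlt; exact ((mate_ne_iff hρ x).mpr hlt) h

lemma mate_invol {ρ : Fin N → Fin N} (hρ : Pred π col L ρ) (x : Fin N) :
    mate (col := col) ρ (mate (col := col) ρ x) = x := by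
  by_cases h : mate (col := col) ρ x = x
  · rw [h, h]
  · set z := mate (col := col) ρ x with hz
    have hcz : col z = col x := mate_col ρ x
    have hvz : (ρ z : ℕ) = psw (ρ x) := mate_val h
    have h2 : psw (ρ z : ℕ) < L (col z) := by
      rw [hvz, psw_psw, hcz]
      exact (hρ.2 (col x)).1 (show x ∈ {y | col y = col x} from rfl)
    have hne : mate (col := col) ρ z ≠ z := (mate_ne_iff hρ z).mpr h2
    have hcol : col (mate (col := col) ρ z) = col x := by rw [mate_col (col := col) ρ z, hcz]
    have hval : (ρ (mate (col := col) ρ z) : ℕ) = (ρ x : ℕ) := by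
      rw [mate_val hne, hvz, psw_psw]
    exact (hρ.2 (col x)).2.1 (show mate (col := col) ρ z ∈ {y | col y = col x} from hcol)
      (show x ∈ {y | col y = col x} from rfl) hval


/-- the forward walk from `a` (alternately column-partner and `π`). -/
def seqA (ρ : Fin N → Fin N) (a : Fin N) : ℕ → Fin N
  | 0 => a
  | (k+1) => if k % 2 = 0 then mate (col := col) ρ (seqA ρ a k) else π (seqA ρ a k)

/-- the backward walk from `y` (alternately `π` and column-partner). -/
def seqB (ρ : Fin N → Fin N) (y : Fin N) : ℕ → Fin N
  | 0 => y
  | (l+1) => if l % 2 = 0 then π (seqB ρ y l) else mate (col := col) ρ (seqB ρ y l)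

lemma seqA_zero (ρ : Fin N → Fin N) (a : Fin N) : seqA (π := π) (col := col) ρ a 0 = a := rfl
lemma seqA_succ (ρ : Fin N → Fin N) (a : Fin N) (k : ℕ) :
    seqA (π := π) (col := col) ρ a (k+1) =
      if k % 2 = 0 then mate (col := col) ρ (seqA (π := π) (col := col) ρ a k)
      else π (seqA (π := π) (col := col) ρ a k) := rfl
lemma seqB_zero (ρ : Fin N → Fin N) (y : Fin N) : seqB (π := π) (col := col) ρ y 0 = y := rfl
lemma seqB_succ (ρ : Fin N → Fin N) (y : Fin N) (l : ℕ) :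
    seqB (π := π) (col := col) ρ y (l+1) =
      if l % 2 = 0 then π (seqB (π := π) (col := col) ρ y l)
      else mate (col := col) ρ (seqB (π := π) (col := col) ρ y l) := rfl

section Walk

/-- orbit closure under mate -/
lemma mate_seqA_mem {ρ : Fin N → Fin N} (hρ : Pred π col L ρ) (a : Fin N) (k : ℕ) :
    ∃ j, seqA (π := π) (col := col) ρ a j = mate (col := col) ρ (seqA (π := π) (col := col) ρ a k) := by
  rcases Nat.even_or_odd k with h | h
  · have hk : k % 2 = 0 := Nat.even_iff.mp h
    exact ⟨k+1, by rw [seqA_succ, if_pos hk]⟩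
  · have hk : k % 2 = 1 := Nat.odd_iff.mp h
    obtain ⟨j, rfl⟩ : ∃ j, k = j + 1 := ⟨k-1, by omega⟩
    have hj : j % 2 = 0 := by omega
    refine ⟨j, ?_⟩
    conv_lhs => rw [show seqA (π := π) (col := col) ρ a j =
      mate (col := col) ρ (mate (col := col) ρ (seqA (π := π) (col := col) ρ a j)) from
        (mate_invol hρ _).symm]
    congr 1
    rw [seqA_succ, if_pos hj]

/-- orbit closure under π -/
lemma pi_seqA_mem (hinv : ∀ x : Fin N, π (π x) = x) {ρ : Fin N → Fin N}
    {a : Fin N} (ha : π a = a) (k : ℕ) :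
    ∃ j, seqA (π := π) (col := col) ρ a j = π (seqA (π := π) (col := col) ρ a k) := by
  rcases Nat.even_or_odd k with h | h
  · have hk : k % 2 = 0 := Nat.even_iff.mp h
    rcases Nat.eq_zero_or_pos k with rfl | hpos
    · exact ⟨0, ha.symm⟩
    · obtain ⟨j, rfl⟩ : ∃ j, k = j + 1 := ⟨k-1, by omega⟩
      have hj : j % 2 = 1 := by omega
      refine ⟨j, ?_⟩
      have : seqA (π := π) (col := col) ρ a (j+1) = π (seqA (π := π) (col := col) ρ a j) := by
        rw [seqA_succ]; simp [hj]
      rw [this, hinv]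
  · have hk : k % 2 = 1 := Nat.odd_iff.mp h
    exact ⟨k+1, by rw [seqA_succ]; simp [hk]⟩

end Walk

section Flip

variable (hLN : ∀ x : Fin N, L (col x) ≤ N)

/-- flip the values along the orbit of `a` -/
def flip (ρ : Fin N → Fin N) (a : Fin N) : Fin N → Fin N := fun x =>
  if h : (x ∈ Set.range (seqA (π := π) (col := col) ρ a)) ∧ psw (ρ x : ℕ) < N
  then ⟨psw (ρ x : ℕ), h.2⟩ else ρ x

variable {ρ : Fin N → Fin N} {a : Fin N}

lemma flip_mem (hρ : Pred π col L ρ) (hLN : ∀ x : Fin N, L (col x) ≤ N)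
    (hval : ∀ k, mate (col := col) ρ (seqA (π := π) (col := col) ρ a k)
      ≠ seqA (π := π) (col := col) ρ a k)
    {x : Fin N} (hx : x ∈ Set.range (seqA (π := π) (col := col) ρ a)) :
    (flip (π := π) (col := col) ρ a x : ℕ) = psw (ρ x : ℕ) := by
  obtain ⟨k, rfl⟩ := hx
  have h1 : psw (ρ (seqA (π := π) (col := col) ρ a k) : ℕ)
      < L (col (seqA (π := π) (col := col) ρ a k)) := (mate_ne_iff hρ _).mp (hval k)
  have h2 : psw (ρ (seqA (π := π) (col := col) ρ a k) : ℕ) < N := lt_of_lt_of_le h1 (hLN _)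
  unfold flip
  rw [dif_pos ⟨⟨k, rfl⟩, h2⟩]

lemma flip_not {x : Fin N} (hx : x ∉ Set.range (seqA (π := π) (col := col) ρ a)) :
    flip (π := π) (col := col) ρ a x = ρ x := by
  unfold flip
  rw [dif_neg (by tauto)]

lemma mem_orbit_mate (hρ : Pred π col L ρ) {x : Fin N}
    (hx : x ∈ Set.range (seqA (π := π) (col := col) ρ a)) :
    mate (col := col) ρ x ∈ Set.range (seqA (π := π) (col := col) ρ a) := by
  obtain ⟨k, rfl⟩ := hx
  obtain ⟨j, hj⟩ := mate_seqA_mem hρ a k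
  exact ⟨j, hj⟩

lemma mem_orbit_pi (hinv : ∀ x : Fin N, π (π x) = x) (ha : π a = a) {x : Fin N}
    (hx : x ∈ Set.range (seqA (π := π) (col := col) ρ a)) :
    π x ∈ Set.range (seqA (π := π) (col := col) ρ a) := by
  obtain ⟨k, rfl⟩ := hx
  obtain ⟨j, hj⟩ := pi_seqA_mem hinv ha k (ρ := ρ)
  exact ⟨j, hj⟩

section FlipCtx

variable (hinv : ∀ x : Fin N, π (π x) = x) (hρ : Pred π col L ρ)
  (ha : π a = a)
  (hval : ∀ k, mate (col := col) ρ (seqA (π := π) (col := col) ρ a k)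
      ≠ seqA (π := π) (col := col) ρ a k)

-- abbreviation for the orbit
local notation "O" => Set.range (seqA (π := π) (col := col) ρ a)

include hval in
lemma orbit_mate_ne {x : Fin N} (hx : x ∈ O) : mate (col := col) ρ x ≠ x := by
  obtain ⟨k, rfl⟩ := hx; exact hval k

include hinv hρ ha hval in
lemma flip_pred (hLN : ∀ x : Fin N, L (col x) ≤ N) :
    Pred π col L (flip (π := π) (col := col) ρ a) := by
  classical
  set ρ' := flip (π := π) (col := col) ρ a with hρ'
  have hmem : ∀ x ∈ O, (ρ' x : ℕ) = psw (ρ x : ℕ) := fun x hx => flip_mem hρ hLN hval hx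
  have hnot : ∀ x, x ∉ O → ρ' x = ρ x := fun x hx => flip_not hx
  have hOpi : ∀ x : Fin N, π x ∈ O ↔ x ∈ O := by
    intro x
    constructor
    · intro h; have := mem_orbit_pi hinv ha h; rwa [hinv] at this
    · exact fun h => mem_orbit_pi hinv ha h
  constructor
  · intro x
    by_cases hx : x ∈ O
    · rw [hmem _ ((hOpi x).mpr hx), hmem _ hx, hρ.1 x]
    · rw [hnot _ (fun h => hx ((hOpi x).mp h)), hnot _ hx, hρ.1 x]
  · intro c
    set e : Fin N → Fin N := fun x => if x ∈ O then mate (col := col) ρ x else x with he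
    have heinv : ∀ x, e (e x) = x := by
      intro x
      by_cases hx : x ∈ O
      · simp only [he, if_pos hx, if_pos (mem_orbit_mate hρ hx)]
        exact mate_invol hρ x
      · simp only [he, if_neg hx, if_neg hx]
    have hecol : ∀ x, col (e x) = col x := by
      intro x
      by_cases hx : x ∈ O
      · simp only [he, if_pos hx]; exact mate_col (col := col) ρ x
      · simp only [he, if_neg hx]
    have heBij : Set.BijOn e {x | col x = c} {x | col x = c} := by
      refine ⟨fun x hx => by simp only [Set.mem_setOf_eq] at *; rw [hecol]; exact hx,
        fun x _ y _ hxy => by rw [← heinv x, hxy, heinv], fun x hx => ?_⟩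
      exact ⟨e x, by simp only [Set.mem_setOf_eq] at *; rw [hecol]; exact hx, heinv x⟩
    have hcomp : Set.EqOn (fun x => ((ρ (e x)) : ℕ)) (fun x => (ρ' x : ℕ)) {x | col x = c} := by
      intro x _
      by_cases hx : x ∈ O
      · simp only [he, if_pos hx]
        rw [hmem _ hx, mate_val (orbit_mate_ne hval hx)]
      · simp only [he, if_neg hx]
        rw [hnot _ hx]
    exact Set.BijOn.congr ((hρ.2 c).comp heBij) hcomp

include hinv hρ ha hval in
lemma mate_flip (hLN : ∀ x : Fin N, L (col x) ≤ N) (x : Fin N) :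
    mate (col := col) (flip (π := π) (col := col) ρ a) x = mate (col := col) ρ x := by
  classical
  set ρ' := flip (π := π) (col := col) ρ a with hd
  have hρ' : Pred π col L ρ' := flip_pred hinv hρ ha hval hLN
  by_cases hx : x ∈ O
  · have hvx : (ρ' x : ℕ) = psw (ρ x : ℕ) := flip_mem hρ hLN hval hx
    have hlt : psw (ρ' x : ℕ) < L (col x) := by
      rw [hvx, psw_psw]
      exact (hρ.2 (col x)).1 (show x ∈ {y | col y = col x} from rfl)
    have hne' : mate (col := col) ρ' x ≠ x := (mate_ne_iff hρ' x).mpr hlt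
    set z := mate (col := col) ρ x with hz
    have hzO : z ∈ O := mem_orbit_mate hρ hx
    have hzv : (ρ' z : ℕ) = psw (ρ z : ℕ) := flip_mem hρ hLN hval hzO
    have hzv2 : (ρ' z : ℕ) = psw (ρ' x : ℕ) := by
      rw [hzv, mate_val (orbit_mate_ne hval hx), hvx]
    have hcz : col z = col x := mate_col (col := col) ρ x
    exact (hρ'.2 (col x)).2.1
      (show mate (col := col) ρ' x ∈ {y | col y = col x} from mate_col (col := col) ρ' x)
      (show z ∈ {y | col y = col x} from hcz)
      (by show ((ρ' (mate (col := col) ρ' x)) : ℕ) = (ρ' z : ℕ)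
          rw [mate_val hne', hzv2])
  · have hvx : ρ' x = ρ x := flip_not hx
    by_cases hm : mate (col := col) ρ x = x
    · have h1 : ¬ psw (ρ x : ℕ) < L (col x) := mate_eq_self hρ hm
      have : ¬ mate (col := col) ρ' x ≠ x := by
        rw [mate_ne_iff hρ' x, hvx]; exact h1
      rw [hm]; exact not_ne_iff.mp this
    · set z := mate (col := col) ρ x with hz
      have hzO : z ∉ O := fun h => hx (by
        have := mem_orbit_mate hρ h
        rwa [mate_invol hρ] at this)
      have hzv : ρ' z = ρ z := flip_not hzO
      have hlt : psw (ρ' x : ℕ) < L (col x) := by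
        rw [hvx]; exact (mate_ne_iff hρ x).mp hm
      have hne' : mate (col := col) ρ' x ≠ x := (mate_ne_iff hρ' x).mpr hlt
      have hcz : col z = col x := mate_col (col := col) ρ x
      exact (hρ'.2 (col x)).2.1
        (show mate (col := col) ρ' x ∈ {y | col y = col x} from mate_col (col := col) ρ' x)
        (show z ∈ {y | col y = col x} from hcz)
        (by show ((ρ' (mate (col := col) ρ' x)) : ℕ) = (ρ' z : ℕ)
            rw [mate_val hne', hzv, mate_val hm, hvx])

include hinv hρ ha hval in
lemma seqA_flip (hLN : ∀ x : Fin N, L (col x) ≤ N) (b : Fin N) (k : ℕ) :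
    seqA (π := π) (col := col) (flip (π := π) (col := col) ρ a) b k
      = seqA (π := π) (col := col) ρ b k := by
  induction k with
  | zero => rfl
  | succ k ih =>
    rw [seqA_succ, seqA_succ, ih]
    by_cases h : k % 2 = 0
    · rw [if_pos h, if_pos h, mate_flip hinv hρ ha hval hLN]
    · rw [if_neg h, if_neg h]

include hinv hρ ha hval in
lemma flip_flip (hLN : ∀ x : Fin N, L (col x) ≤ N) :
    flip (π := π) (col := col) (flip (π := π) (col := col) ρ a) a = ρ := by
  classical
  set ρ' := flip (π := π) (col := col) ρ a with hd
  have hOeq : Set.range (seqA (π := π) (col := col) ρ' a) = O := by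
    have : ∀ k, seqA (π := π) (col := col) ρ' a k = seqA (π := π) (col := col) ρ a k :=
      seqA_flip hinv hρ ha hval hLN a
    ext x; constructor
    · rintro ⟨k, rfl⟩; exact ⟨k, (this k).symm⟩
    · rintro ⟨k, rfl⟩; exact ⟨k, this k⟩
  funext x
  by_cases hx : x ∈ O
  · have h1 : (ρ' x : ℕ) = psw (ρ x : ℕ) := flip_mem hρ hLN hval hx
    have h2 : psw (ρ' x : ℕ) = (ρ x : ℕ) := by rw [h1, psw_psw]
    have h3 : psw (ρ' x : ℕ) < N := by rw [h2]; exact (ρ x).isLt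
    have hx' : x ∈ Set.range (seqA (π := π) (col := col) ρ' a) := by rwa [hOeq]
    apply Fin.ext
    unfold flip
    rw [dif_pos ⟨hx', h3⟩]
    exact h2
  · have hx' : x ∉ Set.range (seqA (π := π) (col := col) ρ' a) := by rwa [hOeq]
    show flip (π := π) (col := col) ρ' a x = ρ x
    rw [flip_not hx']
    exact flip_not hx

include hρ hval in
lemma flip_ne (hLN : ∀ x : Fin N, L (col x) ≤ N) :
    flip (π := π) (col := col) ρ a ≠ ρ := by
  intro h
  have h1 : (flip (π := π) (col := col) ρ a a : ℕ) = psw (ρ a : ℕ) :=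
    flip_mem hρ hLN hval ⟨0, rfl⟩
  rw [h] at h1
  exact psw_ne _ h1.symm

end FlipCtx

end Flip

/-- a solution is rigid if every walk starting from a `π`-fixed point hits a
mate-fixed point. -/
def Rigid (ρ : Fin N → Fin N) : Prop :=
  ∀ b : Fin N, π b = b →
    ∃ k, mate (col := col) ρ (seqA (π := π) (col := col) ρ b k)
      = seqA (π := π) (col := col) ρ b k

lemma rigid_flip_iff (hinv : ∀ x : Fin N, π (π x) = x) {ρ : Fin N → Fin N}
    (hρ : Pred π col L ρ) {a : Fin N} (ha : π a = a)
    (hval : ∀ k, mate (col := col) ρ (seqA (π := π) (col := col) ρ a k)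
      ≠ seqA (π := π) (col := col) ρ a k)
    (hLN : ∀ x : Fin N, L (col x) ≤ N) :
    Rigid (π := π) (col := col) (flip (π := π) (col := col) ρ a)
      ↔ Rigid (π := π) (col := col) ρ := by
  unfold Rigid
  apply forall_congr'; intro b
  apply imp_congr_right; intro hb
  apply exists_congr; intro k
  rw [seqA_flip hinv hρ ha hval hLN, mate_flip hinv hρ ha hval hLN]


lemma even_card_invol {α : Type*} (s : Finset α) (g : ∀ a ∈ s, α)
    (gmem : ∀ a ha, g a ha ∈ s) (ginv : ∀ a ha, g (g a ha) (gmem a ha) = a)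
    (gne : ∀ a ha, g a ha ≠ a) : s.card % 2 = 0 := by
  have hsum : ∑ _x ∈ s, (1 : ZMod 2) = 0 :=
    Finset.sum_involution g (fun a ha => by decide) (fun a ha _ => gne a ha) gmem ginv
  rw [Finset.sum_const, nsmul_eq_mul, mul_one] at hsum
  have := (ZMod.natCast_eq_zero_iff s.card 2).mp hsum
  omega

open Finset in
/-- the set of `π`-fixed starting points whose walk never meets a mate-fixed point -/
def cand (ρ : Fin N → Fin N) : Finset (Fin N) :=
  univ.filter (fun b => π b = b ∧ ∀ k, mate (col := col) ρ (seqA (π := π) (col := col) ρ b k)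
    ≠ seqA (π := π) (col := col) ρ b k)

lemma cand_nonempty {ρ : Fin N → Fin N} (hnr : ¬ Rigid (π := π) (col := col) ρ) :
    (cand (π := π) (col := col) ρ).Nonempty := by
  unfold Rigid at hnr
  push_neg at hnr
  obtain ⟨b, hb, hk⟩ := hnr
  exact ⟨b, Finset.mem_filter.mpr ⟨Finset.mem_univ _, hb, hk⟩⟩

lemma cand_flip (hinv : ∀ x : Fin N, π (π x) = x) {ρ : Fin N → Fin N}
    (hρ : Pred π col L ρ) {a : Fin N} (ha : π a = a)
    (hval : ∀ k, mate (col := col) ρ (seqA (π := π) (col := col) ρ a k)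
      ≠ seqA (π := π) (col := col) ρ a k)
    (hLN : ∀ x : Fin N, L (col x) ≤ N) :
    cand (π := π) (col := col) (flip (π := π) (col := col) ρ a)
      = cand (π := π) (col := col) ρ := by
  unfold cand
  apply Finset.filter_congr
  intro b _
  constructor
  · rintro ⟨h1, h2⟩
    refine ⟨h1, fun k => ?_⟩
    have := h2 k
    rwa [seqA_flip hinv hρ ha hval hLN, mate_flip hinv hρ ha hval hLN] at this
  · rintro ⟨h1, h2⟩
    refine ⟨h1, fun k => ?_⟩
    rw [seqA_flip hinv hρ ha hval hLN, mate_flip hinv hρ ha hval hLN]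
    exact h2 k

open Finset in
lemma nonrigid_even (hinv : ∀ x : Fin N, π (π x) = x) (hLN : ∀ x : Fin N, L (col x) ≤ N) :
    ((univ.filter (fun ρ : Fin N → Fin N =>
      Pred π col L ρ ∧ ¬ Rigid (π := π) (col := col) ρ)).card) % 2 = 0 := by
  classical
  set s := univ.filter (fun ρ : Fin N → Fin N =>
      Pred π col L ρ ∧ ¬ Rigid (π := π) (col := col) ρ) with hs
  have hmemiff : ∀ ρ, ρ ∈ s ↔ Pred π col L ρ ∧ ¬ Rigid (π := π) (col := col) ρ := by
    intro ρ; simp [hs]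
  -- data extracted from membership
  have hbad : ∀ ρ (hρs : ρ ∈ s), (cand (π := π) (col := col) ρ).Nonempty :=
    fun ρ hρs => cand_nonempty ((hmemiff ρ).mp hρs).2
  set g : ∀ ρ ∈ s, (Fin N → Fin N) := fun ρ hρs =>
    flip (π := π) (col := col) ρ ((cand (π := π) (col := col) ρ).min' (hbad ρ hρs)) with hg
  have hbprop : ∀ ρ (hρs : ρ ∈ s),
      π ((cand (π := π) (col := col) ρ).min' (hbad ρ hρs))
        = (cand (π := π) (col := col) ρ).min' (hbad ρ hρs) ∧
      ∀ k, mate (col := col) ρ (seqA (π := π) (col := col) ρ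
          ((cand (π := π) (col := col) ρ).min' (hbad ρ hρs)) k)
        ≠ seqA (π := π) (col := col) ρ ((cand (π := π) (col := col) ρ).min' (hbad ρ hρs)) k := by
    intro ρ hρs
    have := Finset.min'_mem (cand (π := π) (col := col) ρ) (hbad ρ hρs)
    unfold cand at this
    simpa [cand] using this
  have gmem : ∀ ρ (hρs : ρ ∈ s), g ρ hρs ∈ s := by
    intro ρ hρs
    obtain ⟨hρ, hnr⟩ := (hmemiff ρ).mp hρs
    obtain ⟨hb1, hb2⟩ := hbprop ρ hρs
    refine (hmemiff _).mpr ⟨flip_pred hinv hρ hb1 hb2 hLN, ?_⟩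
    rw [rigid_flip_iff hinv hρ hb1 hb2 hLN]
    exact hnr
  have ginv : ∀ ρ (hρs : ρ ∈ s), g (g ρ hρs) (gmem ρ hρs) = ρ := by
    intro ρ hρs
    obtain ⟨hρ, hnr⟩ := (hmemiff ρ).mp hρs
    obtain ⟨hb1, hb2⟩ := hbprop ρ hρs
    have hcand : cand (π := π) (col := col) (g ρ hρs) = cand (π := π) (col := col) ρ :=
      cand_flip hinv hρ hb1 hb2 hLN
    have hmin : (cand (π := π) (col := col) (g ρ hρs)).min' (hbad _ (gmem ρ hρs))
        = (cand (π := π) (col := col) ρ).min' (hbad ρ hρs) := by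
      congr 1
    show flip (π := π) (col := col) (g ρ hρs)
      ((cand (π := π) (col := col) (g ρ hρs)).min' (hbad _ (gmem ρ hρs))) = ρ
    rw [hmin]
    exact flip_flip hinv hρ hb1 hb2 hLN
  have gne : ∀ ρ (hρs : ρ ∈ s), g ρ hρs ≠ ρ := by
    intro ρ hρs
    obtain ⟨hρ, hnr⟩ := (hmemiff ρ).mp hρs
    obtain ⟨hb1, hb2⟩ := hbprop ρ hρs
    exact flip_ne hρ hb2 hLN
  exact even_card_invol s g gmem ginv gne

open Finset in
lemma exists_rigid (hinv : ∀ x : Fin N, π (π x) = x) (hLN : ∀ x : Fin N, L (col x) ≤ N)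
    (hodd : Odd ((univ.filter (Pred π col L)).card)) :
    ∃ ρ, Pred π col L ρ ∧ Rigid (π := π) (col := col) ρ := by
  classical
  have hsplit : (univ.filter (Pred π col L)).card
      = (univ.filter (fun ρ : Fin N → Fin N =>
          Pred π col L ρ ∧ Rigid (π := π) (col := col) ρ)).card
        + (univ.filter (fun ρ : Fin N → Fin N =>
          Pred π col L ρ ∧ ¬ Rigid (π := π) (col := col) ρ)).card := by
    rw [← Finset.filter_filter, ← Finset.filter_filter,
      Finset.card_filter_add_card_filter_not]
  have heven := nonrigid_even (π := π) (col := col) (L := L) hinv hLN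
  have : (univ.filter (fun ρ : Fin N → Fin N =>
      Pred π col L ρ ∧ Rigid (π := π) (col := col) ρ)).card ≠ 0 := by
    intro h0
    rw [hsplit, h0, zero_add] at hodd
    rw [Nat.odd_iff] at hodd
    omega
  obtain ⟨ρ, hρ⟩ := Finset.card_ne_zero.mp this
  have := Finset.mem_filter.mp hρ
  exact ⟨ρ, this.2⟩


section RigidAnalysis

variable (hinv : ∀ x : Fin N, π (π x) = x) {ρ : Fin N → Fin N} (hρ : Pred π col L ρ)
variable {a : Fin N} (ha : π a = a)

omit hinv hρ ha in
lemma zsucc_even {k : ℕ} (hk : k % 2 = 0) :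
    seqA (π := π) (col := col) ρ a (k+1) = mate (col := col) ρ (seqA (π := π) (col := col) ρ a k) := by
  rw [seqA_succ, if_pos hk]

omit hinv hρ ha in
lemma zsucc_odd {k : ℕ} (hk : k % 2 = 1) :
    seqA (π := π) (col := col) ρ a (k+1) = π (seqA (π := π) (col := col) ρ a k) := by
  rw [seqA_succ, if_neg (by omega)]

include hρ in
lemma kstar_even (hex : ∃ k, mate (col := col) ρ (seqA (π := π) (col := col) ρ a k)
    = seqA (π := π) (col := col) ρ a k) : (Nat.find hex) % 2 = 0 := by
  by_contra h
  have hk : (Nat.find hex) % 2 = 1 := by omega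
  obtain ⟨j, hj⟩ : ∃ j, Nat.find hex = j + 1 := ⟨Nat.find hex - 1, by omega⟩
  have hje : j % 2 = 0 := by omega
  have h1 : seqA (π := π) (col := col) ρ a (Nat.find hex)
      = mate (col := col) ρ (seqA (π := π) (col := col) ρ a j) := by
    rw [hj]; exact zsucc_even hje
  have hfix := Nat.find_spec hex
  have h2 : seqA (π := π) (col := col) ρ a j = seqA (π := π) (col := col) ρ a (Nat.find hex) := by
    conv_lhs => rw [← mate_invol hρ (seqA (π := π) (col := col) ρ a j), ← h1]
    exact hfix
  have h3 : mate (col := col) ρ (seqA (π := π) (col := col) ρ a j)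
      = seqA (π := π) (col := col) ρ a j := by
    rw [h2]
    exact hfix
  exact absurd h3 (Nat.find_min hex (by omega))

include hinv hρ ha in
lemma reflect_contra (hex : ∃ k, mate (col := col) ρ (seqA (π := π) (col := col) ρ a k)
      = seqA (π := π) (col := col) ρ a k)
    {m : ℕ} (hme : m % 2 = 0) (hmpos : 0 < m) (hmle : m ≤ Nat.find hex)
    (hpifix : π (seqA (π := π) (col := col) ρ a m) = seqA (π := π) (col := col) ρ a m) :
    False := by
  set z : ℕ → Fin N := seqA (π := π) (col := col) ρ a with hzdef
  have hm1 : z m = z (m - 1) := by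
    have hodd : (m - 1) % 2 = 1 := by omega
    have : z m = π (z (m-1)) := by
      conv_lhs => rw [show m = (m-1)+1 by omega]
      exact zsucc_odd hodd
    have h2 : π (π (z (m-1))) = π (z (m-1)) := by rw [← this]; exact hpifix
    rw [hinv] at h2
    rw [this]
    exact h2.symm
  have refl2 : ∀ r, r ≤ m - 1 → z (m + r) = z (m - 1 - r) := by
    intro r
    induction r with
    | zero => intro _; simpa using hm1
    | succ r ih =>
      intro hr
      have hr' : r ≤ m - 1 := by omega
      have ihr := ih hr'
      have hd : m - 1 - r = (m - 2 - r) + 1 := by omega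
      have hpar : (m + r) % 2 = (m - 2 - r) % 2 := by omega
      have hgoal : m - 1 - (r + 1) = m - 2 - r := by omega
      rw [hgoal]
      show z (m + r + 1) = z (m - 2 - r)
      rcases Nat.even_or_odd (m + r) with he | ho
      · have h0 : (m + r) % 2 = 0 := Nat.even_iff.mp he
        have h0' : (m - 2 - r) % 2 = 0 := by omega
        have e1 : z (m + r + 1) = mate (col := col) ρ (z (m + r)) := zsucc_even h0
        have e2 : z ((m - 2 - r) + 1) = mate (col := col) ρ (z (m - 2 - r)) := zsucc_even h0'
        rw [e1, ihr, hd, e2, mate_invol hρ]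
      · have h0 : (m + r) % 2 = 1 := Nat.odd_iff.mp ho
        have h0' : (m - 2 - r) % 2 = 1 := by omega
        have e1 : z (m + r + 1) = π (z (m + r)) := zsucc_odd h0
        have e2 : z ((m - 2 - r) + 1) = π (z (m - 2 - r)) := zsucc_odd h0'
        rw [e1, ihr, hd, e2, hinv]
  have refl3 : z (2 * m) = z 0 := by
    have h1 : z (2 * m - 1) = z 0 := by
      have := refl2 (m - 1) (le_refl _)
      rw [show m + (m - 1) = 2 * m - 1 by omega, show m - 1 - (m - 1) = 0 by omega] at this
      exact this
    have h2 : z (2 * m) = π (z (2 * m - 1)) := by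
      conv_lhs => rw [show 2 * m = (2 * m - 1) + 1 by omega]
      exact zsucc_odd (by omega)
    rw [h2, h1]
    show π (z 0) = z 0
    exact ha
  have refl4 : ∀ s, z (2 * m + s) = z s := by
    intro s
    induction s with
    | zero => simpa using refl3
    | succ s ih =>
      rcases Nat.even_or_odd s with he | ho
      · have h0 : s % 2 = 0 := Nat.even_iff.mp he
        have h1 : (2 * m + s) % 2 = 0 := by omega
        have e1 : z (2*m + s + 1) = mate (col := col) ρ (z (2*m + s)) := zsucc_even h1
        have e2 : z (s + 1) = mate (col := col) ρ (z s) := zsucc_even h0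
        show z (2*m + s + 1) = z (s + 1)
        rw [e1, e2, ih]
      · have h0 : s % 2 = 1 := Nat.odd_iff.mp ho
        have h1 : (2 * m + s) % 2 = 1 := by omega
        have e1 : z (2*m + s + 1) = π (z (2*m + s)) := zsucc_odd h1
        have e2 : z (s + 1) = π (z s) := zsucc_odd h0
        show z (2*m + s + 1) = z (s + 1)
        rw [e1, e2, ih]
  have refl5 : ∀ k, ∃ j, j < m ∧ z k = z j := by
    intro k
    induction k using Nat.strong_induction_on with
    | _ k ih =>
      by_cases h1 : k < m
      · exact ⟨k, h1, rfl⟩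
      · by_cases h2 : k < 2 * m
        · refine ⟨2 * m - 1 - k, by omega, ?_⟩
          have := refl2 (k - m) (by omega)
          rw [show m + (k - m) = k by omega] at this
          rw [this]
          congr 1
          omega
        · have hk2 : k - 2 * m < k := by omega
          obtain ⟨j, hj, hje⟩ := ih (k - 2 * m) hk2
          refine ⟨j, hj, ?_⟩
          have := refl4 (k - 2 * m)
          rw [show 2 * m + (k - 2 * m) = k by omega] at this
          rw [← this] at hje
          exact hje
  obtain ⟨j, hjm, hje⟩ := refl5 (Nat.find hex)
  have hfix := Nat.find_spec hex
  rw [hje] at hfix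
  exact absurd hfix (Nat.find_min hex (by omega))

include hinv hρ ha in
lemma no_pifix_interior (hex : ∃ k, mate (col := col) ρ (seqA (π := π) (col := col) ρ a k)
      = seqA (π := π) (col := col) ρ a k)
    {j : ℕ} (hj0 : 0 < j) (hjle : j ≤ Nat.find hex) :
    π (seqA (π := π) (col := col) ρ a j) ≠ seqA (π := π) (col := col) ρ a j := by
  intro hfix
  rcases Nat.even_or_odd j with he | ho
  · exact reflect_contra hinv hρ ha hex (Nat.even_iff.mp he) hj0 hjle hfix
  · have hjo : j % 2 = 1 := Nat.odd_iff.mp ho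
    have hkeven := kstar_even hρ (a := a) hex
    have hjlt : j < Nat.find hex := by omega
    have h1 : seqA (π := π) (col := col) ρ a (j+1) = π (seqA (π := π) (col := col) ρ a j) :=
      zsucc_odd hjo
    have h2 : seqA (π := π) (col := col) ρ a (j+1) = seqA (π := π) (col := col) ρ a j := by
      rw [h1, hfix]
    have h3 : π (seqA (π := π) (col := col) ρ a (j+1)) = seqA (π := π) (col := col) ρ a (j+1) := by
      rw [h2]; exact hfix
    exact reflect_contra hinv hρ ha hex (by omega) (by omega) (by omega) h3

include hinv hρ ha in
lemma seqB_eq (hex : ∃ k, mate (col := col) ρ (seqA (π := π) (col := col) ρ a k)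
      = seqA (π := π) (col := col) ρ a k)
    {l : ℕ} (hl : l ≤ Nat.find hex) :
    seqB (π := π) (col := col) ρ (seqA (π := π) (col := col) ρ a (Nat.find hex)) l
      = seqA (π := π) (col := col) ρ a (Nat.find hex - l) := by
  set K := Nat.find hex with hK
  have hKeven : K % 2 = 0 := kstar_even hρ (a := a) hex
  induction l with
  | zero => simp [seqB_zero]
  | succ l ih =>
    have hl' : l ≤ K := by omega
    have ihl := ih (by omega)
    have hd : K - l = (K - l - 1) + 1 := by omega
    rcases Nat.even_or_odd l with he | ho
    · have h0 : l % 2 = 0 := Nat.even_iff.mp he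
      have h1 : (K - l - 1) % 2 = 1 := by omega
      rw [seqB_succ, if_pos h0, ihl]
      have : seqA (π := π) (col := col) ρ a (K - l) = π (seqA (π := π) (col := col) ρ a (K - l - 1)) := by
        conv_lhs => rw [hd]
        exact zsucc_odd h1
      rw [this, hinv]
      congr 1 <;> omega
    · have h0 : l % 2 = 1 := Nat.odd_iff.mp ho
      have h1 : (K - l - 1) % 2 = 0 := by omega
      rw [seqB_succ, if_neg (by omega), ihl]
      have : seqA (π := π) (col := col) ρ a (K - l) = mate (col := col) ρ (seqA (π := π) (col := col) ρ a (K - l - 1)) := by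
        conv_lhs => rw [hd]
        exact zsucc_even h1
      rw [this, mate_invol hρ]
      congr 1 <;> omega

include hinv hρ ha in
lemma backQ_exists (hex : ∃ k, mate (col := col) ρ (seqA (π := π) (col := col) ρ a k)
      = seqA (π := π) (col := col) ρ a k) {y : Fin N}
    (hy : y = seqA (π := π) (col := col) ρ a (Nat.find hex)) :
    ∃ l, π (seqB (π := π) (col := col) ρ y l)
      = seqB (π := π) (col := col) ρ y l := by
  subst hy
  refine ⟨Nat.find hex, ?_⟩
  have := seqB_eq hinv hρ ha hex (le_refl (Nat.find hex))
  rw [Nat.sub_self] at this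
  rw [this]
  exact ha

include hinv hρ ha in
lemma back_recover (hex : ∃ k, mate (col := col) ρ (seqA (π := π) (col := col) ρ a k)
      = seqA (π := π) (col := col) ρ a k) {y : Fin N}
    (hy : y = seqA (π := π) (col := col) ρ a (Nat.find hex))
    (hQ : ∃ l, π (seqB (π := π) (col := col) ρ y l)
      = seqB (π := π) (col := col) ρ y l) :
    seqB (π := π) (col := col) ρ y (Nat.find hQ) = a := by
  subst hy
  set K := Nat.find hex with hK
  have hBK : seqB (π := π) (col := col) ρ (seqA (π := π) (col := col) ρ a K) K
      = a := by
    have := seqB_eq hinv hρ ha hex (le_refl K)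
    rw [Nat.sub_self] at this
    exact this
  have hfind : Nat.find hQ = K := by
    have hle : Nat.find hQ ≤ K := Nat.find_le (by rw [hBK]; exact ha)
    rcases Nat.lt_or_ge (Nat.find hQ) K with hlt | hge
    · exfalso
      have hspec := Nat.find_spec hQ
      have heq := seqB_eq hinv hρ ha hex (le_of_lt hlt)
      rw [heq] at hspec
      exact no_pifix_interior hinv hρ ha hex (by omega) (by omega) hspec
    · omega
  rw [hfind, hBK]

omit hinv ha in
include hρ in
lemma mate_fixed_top {y : Fin N} (h : mate (col := col) ρ y = y) :
    (ρ y : ℕ) % 2 = 0 ∧ L (col y) = (ρ y : ℕ) + 1 := by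
  have h1 : ¬ psw (ρ y : ℕ) < L (col y) := mate_eq_self hρ h
  have h2 : (ρ y : ℕ) < L (col y) :=
    (hρ.2 (col y)).1 (show y ∈ {x | col x = col y} from rfl)
  unfold psw at h1
  rcases Nat.even_or_odd (ρ y : ℕ) with he | ho
  · have h0 : (ρ y : ℕ) % 2 = 0 := Nat.even_iff.mp he
    rw [if_pos h0] at h1
    exact ⟨h0, by omega⟩
  · have h0 : (ρ y : ℕ) % 2 = 1 := Nat.odd_iff.mp ho
    rw [if_neg (by omega)] at h1
    omega

end RigidAnalysis

open Finset in
theorem core_bound (hinv : ∀ x : Fin N, π (π x) = x) (hLN : ∀ x : Fin N, L (col x) ≤ N)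
    (hodd : Odd ((univ.filter (Pred π col L)).card)) :
    (univ.filter (fun x : Fin N => π x = x)).card
      ≤ ((univ.image col).filter (fun c => L c % 2 = 1)).card := by
  classical
  obtain ⟨ρ, hρ, hrig⟩ := exists_rigid hinv hLN hodd
  set f : Fin N → ℕ := fun b =>
    if hb : π b = b then
      col (seqA (π := π) (col := col) ρ b (Nat.find (hrig b hb))) else 0 with hf
  apply Finset.card_le_card_of_injOn f
  · intro b hb
    have hbf : π b = b := (Finset.mem_filter.mp hb).2
    have hex := hrig b hbf
    have hfb : f b = col (seqA (π := π) (col := col) ρ b (Nat.find (hrig b hbf))) := by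
      rw [hf]; exact dif_pos hbf
    have hy := Nat.find_spec (hrig b hbf)
    obtain ⟨hpar, hL⟩ := mate_fixed_top hρ hy
    rw [hfb]
    apply Finset.mem_filter.mpr
    refine ⟨Finset.mem_image_of_mem col (Finset.mem_univ _), ?_⟩
    rw [hL]
    omega
  · intro b hb b' hb' hff
    have hbf : π b = b := by
      have := Finset.mem_coe.mp hb
      exact (Finset.mem_filter.mp this).2
    have hb'f : π b' = b' := by
      have := Finset.mem_coe.mp hb'
      exact (Finset.mem_filter.mp this).2
    have hex := hrig b hbf
    have hex' := hrig b' hb'f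
    have hfb : f b = col (seqA (π := π) (col := col) ρ b (Nat.find hex)) := by
      rw [hf]; exact dif_pos hbf
    have hfb' : f b' = col (seqA (π := π) (col := col) ρ b' (Nat.find hex')) := by
      rw [hf]; exact dif_pos hb'f
    have hyfix : mate (col := col) ρ (seqA (π := π) (col := col) ρ b (Nat.find hex))
        = seqA (π := π) (col := col) ρ b (Nat.find hex) := Nat.find_spec hex
    have hy'fix : mate (col := col) ρ (seqA (π := π) (col := col) ρ b' (Nat.find hex'))
        = seqA (π := π) (col := col) ρ b' (Nat.find hex') := Nat.find_spec hex'
    have hcc : col (seqA (π := π) (col := col) ρ b (Nat.find hex))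
        = col (seqA (π := π) (col := col) ρ b' (Nat.find hex')) := by
      rw [← hfb, ← hfb', hff]
    obtain ⟨hp1, hL1⟩ := mate_fixed_top hρ hyfix
    obtain ⟨hp2, hL2⟩ := mate_fixed_top hρ hy'fix
    have hvv : (ρ (seqA (π := π) (col := col) ρ b (Nat.find hex)) : ℕ)
        = (ρ (seqA (π := π) (col := col) ρ b' (Nat.find hex')) : ℕ) := by
      have h9 : L (col (seqA (π := π) (col := col) ρ b (Nat.find hex)))
          = L (col (seqA (π := π) (col := col) ρ b' (Nat.find hex'))) := by rw [hcc]
      rw [hL1, hL2] at h9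
      omega
    have hyy : seqA (π := π) (col := col) ρ b' (Nat.find hex')
        = seqA (π := π) (col := col) ρ b (Nat.find hex) :=
      (hρ.2 (col (seqA (π := π) (col := col) ρ b (Nat.find hex)))).2.1
        (show seqA (π := π) (col := col) ρ b' (Nat.find hex')
          ∈ {x | col x = col (seqA (π := π) (col := col) ρ b (Nat.find hex))} from hcc.symm)
        (show seqA (π := π) (col := col) ρ b (Nat.find hex)
          ∈ {x | col x = col (seqA (π := π) (col := col) ρ b (Nat.find hex))} from rfl) hvv.symm
    have hQ := backQ_exists hinv hρ hbf hex rfl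
    have hback := back_recover hinv hρ hbf hex rfl hQ
    have hback' := back_recover hinv hρ hb'f hex' hyy.symm hQ
    rw [← hback, ← hback']
  
end OddCore

namespace OddAux

lemma dc_eq_range (A : Finset ℕ) (h : ∀ a ∈ A, ∀ b, b < a → b ∈ A) :
    A = Finset.range A.card := by
  have key : ∀ k, k ∈ A ↔ k < A.card := by
    intro k
    constructor
    · intro hk
      have hsub : Finset.range (k+1) ⊆ A := by
        intro b hb
        have hb' : b < k + 1 := Finset.mem_range.mp hb
        rcases Nat.lt_or_ge b k with h1 | h1
        · exact h k hk b h1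
        · have : b = k := by omega
          rwa [this]
      have := Finset.card_le_card hsub
      rw [Finset.card_range] at this
      omega
    · intro hk
      by_contra hkA
      have hsub : A ⊆ Finset.range k := by
        intro a ha
        rcases Nat.lt_or_ge a k with h1 | h1
        · exact Finset.mem_range.mpr h1
        · rcases Nat.eq_or_lt_of_le h1 with h2 | h2
          · exact absurd (h2 ▸ ha) hkA
          · exact absurd (h a ha k h2) hkA
      have := Finset.card_le_card hsub
      rw [Finset.card_range] at this
      omega
  ext k
  rw [key, Finset.mem_range]

lemma half_count (K : ℕ) : ((Finset.range K).filter (fun r => r % 2 = 1)).card = K / 2 := by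
  induction K with
  | zero => simp
  | succ K ih =>
    rw [Finset.range_add_one, Finset.filter_insert]
    by_cases h : K % 2 = 1
    · rw [if_pos h, Finset.card_insert_of_notMem (by simp), ih]
      omega
    · rw [if_neg h, ih]
      omega

lemma sum_formula_nat (l : List ℕ) :
    l.sum = ∑ i ∈ Finset.range l.length, l.getD i 0 := by
  induction l with
  | nil => simp
  | cons a t ih =>
    rw [List.sum_cons, List.length_cons, Finset.sum_range_succ', ih]
    simp [List.getD_cons_succ, List.getD_cons_zero, add_comm]

lemma coe_list_eq_map (μ : List ℕ) :
    ((μ.map fun i => (i : ℚ))) = (μ.map (fun i : ℕ => (i : ℚ))) := by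
  induction μ with
  | nil => rfl
  | cons a l ih => simpa using ih

lemma alt_formula (l : List ℚ) :
    l.alternatingSum = ∑ i ∈ Finset.range l.length, (-1)^i * l.getD i 0 := by
  suffices h : ∀ K (l : List ℚ), l.length = K →
      l.alternatingSum = ∑ i ∈ Finset.range l.length, (-1)^i * l.getD i 0 from
    h l.length l rfl
  intro K
  induction K using Nat.strong_induction_on with
  | _ K ih =>
    intro l hn
    match l with
    | [] => simp [List.alternatingSum]
    | [a] => simp [List.alternatingSum]
    | (a :: b :: tl) =>
      have hlen : (a :: b :: tl).length = tl.length + 2 := by simp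
      have hKlen : tl.length < K := by rw [← hn]; simp
      have ihl := ih tl.length hKlen tl rfl
      rw [List.alternatingSum, ihl, hlen]
      rw [Finset.sum_range_succ', Finset.sum_range_succ']
      simp only [List.getD_cons_succ, List.getD_cons_zero, pow_succ, pow_zero]
      have hfix : ∀ x : ℕ, ((-1:ℚ))^x * -1 * -1 * tl.getD x 0 = (-1)^x * tl.getD x 0 := by
        intro x; ring
      simp only [hfix]
      ring

end OddAux

namespace OddBridge
open OddCore OddAux

variable {n : ℕ} {μ : List ℕ}

/-- number of rows whose length exceeds `c`, i.e. the length of column `c`. -/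
def LF (μ : List ℕ) (c : ℕ) : ℕ :=
  ((Finset.range μ.length).filter (fun r => c < μ.getD r 0)).card

lemma getD_fin (μ : List ℕ) (r : Fin μ.length) : μ.getD (r : ℕ) 0 = μ.get r := by
  rw [List.getD_eq_getElem _ _ r.isLt]
  simp [List.get_eq_getElem]

lemma sorted_strict (hdist : μ.Chain' (· > ·)) {i j : ℕ} (hij : i < j) (hj : j < μ.length) :
    μ.getD j 0 < μ.getD i 0 := by
  have hp : μ.Pairwise (· > ·) := List.isChain_iff_pairwise.mp hdist
  have := List.pairwise_iff_getElem.mp hp i j (by omega) hj hij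
  rw [List.getD_eq_getElem _ _ (show i < μ.length by omega), List.getD_eq_getElem _ _ hj]
  exact this

lemma lt_LF_iff (hdist : μ.Chain' (· > ·)) (c v : ℕ) :
    v < LF μ c ↔ (v < μ.length ∧ c < μ.getD v 0) := by
  set A := (Finset.range μ.length).filter (fun r => c < μ.getD r 0) with hA
  have hmem : ∀ a, a ∈ A ↔ (a < μ.length ∧ c < μ.getD a 0) := by
    intro a; simp [hA]
  have hdc : ∀ a ∈ A, ∀ b, b < a → b ∈ A := by
    intro a ha b hba
    rw [hmem] at ha ⊢
    exact ⟨by omega, lt_trans ha.2 (sorted_strict hdist hba ha.1)⟩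
  have hrange := dc_eq_range A hdc
  constructor
  · intro hv
    have : v ∈ A := by rw [hrange]; exact Finset.mem_range.mpr hv
    exact (hmem v).mp this
  · intro hv
    have : v ∈ A := (hmem v).mpr hv
    rw [hrange] at this
    exact Finset.mem_range.mp this

variable (t : YoungTableau n μ)

lemma rowIdx_cell (a : YoungCell μ) : rowIdx t (t a) = (a.1 : ℕ) :=
  congrArg (fun z : YoungCell μ => (z.1 : ℕ)) (Equiv.symm_apply_apply t a)

lemma colIdx_cell (a : YoungCell μ) : colIdx t (t a) = (a.2 : ℕ) :=
  congrArg (fun z : YoungCell μ => (z.2 : ℕ)) (Equiv.symm_apply_apply t a)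

lemma row_lt (x : Fin n) : rowIdx t x < μ.length := (t.symm x).1.isLt

lemma col_lt (x : Fin n) : colIdx t x < μ.getD (rowIdx t x) 0 := by
  show colIdx t x < μ.getD ((t.symm x).1 : ℕ) 0
  rw [getD_fin]
  exact (t.symm x).2.isLt

lemma cell_ext {a b : YoungCell μ} (h1 : (a.1 : ℕ) = (b.1 : ℕ)) (h2 : (a.2 : ℕ) = (b.2 : ℕ)) :
    a = b := by
  rcases a with ⟨r, c⟩; rcases b with ⟨r', c'⟩
  have hr : r = r' := Fin.ext h1
  subst hr
  have hc : c = c' := Fin.ext h2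
  rw [hc]

lemma eq_of_rowcol {x y : Fin n} (hr : rowIdx t x = rowIdx t y)
    (hc : colIdx t x = colIdx t y) : x = y := by
  have h : t.symm x = t.symm y := cell_ext hr hc
  have := congrArg t h
  simpa using this

lemma mem_colStab_iff {σ : Equiv.Perm (Fin n)} :
    σ ∈ colStab t ↔ ∀ i, colIdx t (σ i) = colIdx t i := by
  simp [colStab]

lemma colIdx_inv {σ : Equiv.Perm (Fin n)} (h : ∀ i, colIdx t (σ i) = colIdx t i) (i : Fin n) :
    colIdx t (σ⁻¹ i) = colIdx t i := by
  conv_rhs => rw [← (show σ (σ⁻¹ i) = i from σ.apply_symm_apply i)]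
  exact (h (σ⁻¹ i)).symm

lemma mem_row_iff (σ : Equiv.Perm (Fin n)) (r : Fin μ.length) (x : Fin n) :
    x ∈ (tabloidOf (permTableau σ t)).1 r ↔ rowIdx t (σ⁻¹ x) = (r : ℕ) := by
  show x ∈ Finset.univ.image (fun c : Fin (μ.get r) => (permTableau σ t) ⟨r, c⟩) ↔ _
  constructor
  · intro hx
    obtain ⟨c, -, hc⟩ := Finset.mem_image.mp hx
    have : (permTableau σ t) ⟨r, c⟩ = σ (t ⟨r, c⟩) := rfl
    rw [this] at hc
    have h2 : σ⁻¹ x = t ⟨r, c⟩ := by rw [← hc]; simp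
    show ((t.symm (σ⁻¹ x)).1 : ℕ) = (r : ℕ)
    rw [h2]
    simp
  · intro hx
    have hc2 : colIdx t (σ⁻¹ x) < μ.get r := by
      have := col_lt t (σ⁻¹ x)
      show (((t.symm (σ⁻¹ x)).2 : ℕ)) < μ.get r
      have hval : ((t.symm (σ⁻¹ x)).1 : ℕ) = (r : ℕ) := hx
      have : ((t.symm (σ⁻¹ x)).1) = r := Fin.ext hval
      rw [← this]
      exact (t.symm (σ⁻¹ x)).2.isLt
    refine Finset.mem_image.mpr ⟨⟨colIdx t (σ⁻¹ x), hc2⟩, Finset.mem_univ _, ?_⟩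
    have hcell : (⟨r, ⟨colIdx t (σ⁻¹ x), hc2⟩⟩ : YoungCell μ) = t.symm (σ⁻¹ x) := by
      apply cell_ext
      · exact hx.symm
      · rfl
    show σ (t ⟨r, ⟨colIdx t (σ⁻¹ x), hc2⟩⟩) = x
    rw [hcell]
    simp

lemma fix_iff (π σ : Equiv.Perm (Fin n)) :
    permTabloid π (tabloidOf (permTableau σ t)) = tabloidOf (permTableau σ t)
      ↔ ∀ x, rowIdx t (σ⁻¹ (π x)) = rowIdx t (σ⁻¹ x) := by
  constructor
  · intro h x
    set r : Fin μ.length := ⟨rowIdx t (σ⁻¹ x), row_lt t _⟩ with hr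
    have hx : x ∈ (tabloidOf (permTableau σ t)).1 r := (mem_row_iff t σ r x).mpr rfl
    have hπx : π x ∈ (permTabloid π (tabloidOf (permTableau σ t))).1 r := by
      show π x ∈ ((tabloidOf (permTableau σ t)).1 r).image π
      exact Finset.mem_image_of_mem π hx
    rw [h] at hπx
    exact (mem_row_iff t σ r (π x)).mp hπx
  · intro h
    apply Subtype.ext
    funext r
    ext x
    show x ∈ ((tabloidOf (permTableau σ t)).1 r).image π ↔ _
    have h1 : x ∈ ((tabloidOf (permTableau σ t)).1 r).image π
        ↔ π⁻¹ x ∈ (tabloidOf (permTableau σ t)).1 r := by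
      constructor
      · intro hx
        obtain ⟨y, hy, rfl⟩ := Finset.mem_image.mp hx
        simpa using hy
      · intro hx
        exact Finset.mem_image.mpr ⟨π⁻¹ x, hx, by simp⟩
    rw [h1, mem_row_iff, mem_row_iff]
    have h2 := h (π⁻¹ x)
    rw [show π (π⁻¹ x) = x by simp] at h2
    rw [h2]

lemma card_bridge (hdist : μ.Chain' (· > ·)) (hlen_le : μ.length ≤ n)
    (π : Equiv.Perm (Fin n)) :
    ((colStab t).filter (fun σ => permTabloid π (tabloidOf (permTableau σ t))
        = tabloidOf (permTableau σ t))).card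
      = (Finset.univ.filter (Pred π (colIdx t) (LF μ))).card := by
  classical
  apply Finset.card_bij
    (i := fun σ _ => (fun x : Fin n => (⟨rowIdx t (σ⁻¹ x),
      lt_of_lt_of_le (row_lt t _) hlen_le⟩ : Fin n)))
  · -- maps to solutions
    intro σ hσ
    obtain ⟨hσc, hσf⟩ := Finset.mem_filter.mp hσ
    have hcolstab := (mem_colStab_iff t).mp hσc
    apply Finset.mem_filter.mpr
    refine ⟨Finset.mem_univ _, ?_, ?_⟩
    · intro x
      exact (fix_iff t π σ).mp hσf x
    · intro c
      refine ⟨?_, ?_, ?_⟩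
      · intro x hx
        show rowIdx t (σ⁻¹ x) ∈ Set.Iio (LF μ c)
        rw [Set.mem_Iio, lt_LF_iff hdist]
        refine ⟨row_lt t _, ?_⟩
        have := col_lt t (σ⁻¹ x)
        rwa [colIdx_inv t hcolstab x, hx] at this
      · intro x hx y hy hxy
        simp only [Set.mem_setOf_eq] at hx hy
        have hxy' : rowIdx t (σ⁻¹ x) = rowIdx t (σ⁻¹ y) := hxy
        have hcxy : colIdx t (σ⁻¹ x) = colIdx t (σ⁻¹ y) := by
          rw [colIdx_inv t hcolstab x, colIdx_inv t hcolstab y, hx, hy]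
        have h9 : σ⁻¹ x = σ⁻¹ y := eq_of_rowcol t hxy' hcxy
        have h10 := congrArg σ h9
        simpa using h10
      · intro v hv
        rw [Set.mem_Iio, lt_LF_iff hdist] at hv
        obtain ⟨hv1, hv2⟩ := hv
        have hc2 : c < μ.get ⟨v, hv1⟩ := by rwa [← getD_fin μ ⟨v, hv1⟩]
        refine ⟨σ (t ⟨⟨v, hv1⟩, ⟨c, hc2⟩⟩), ?_, ?_⟩
        · show colIdx t (σ (t ⟨⟨v, hv1⟩, ⟨c, hc2⟩⟩)) = c
          rw [hcolstab]
          exact colIdx_cell t _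
        · show rowIdx t (σ⁻¹ (σ (t ⟨⟨v, hv1⟩, ⟨c, hc2⟩⟩))) = v
          rw [show σ⁻¹ (σ (t ⟨⟨v, hv1⟩, ⟨c, hc2⟩⟩)) = t ⟨⟨v, hv1⟩, ⟨c, hc2⟩⟩ by simp]
          exact rowIdx_cell t _
  · -- injective
    intro σ hσ σ' hσ' heq
    obtain ⟨hσc, -⟩ := Finset.mem_filter.mp hσ
    obtain ⟨hσ'c, -⟩ := Finset.mem_filter.mp hσ'
    have hcolstab := (mem_colStab_iff t).mp hσc
    have hcolstab' := (mem_colStab_iff t).mp hσ'c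
    have hr : ∀ x, rowIdx t (σ⁻¹ x) = rowIdx t (σ'⁻¹ x) := by
      intro x
      have h2 := congrFun heq x
      have h3 := congrArg Fin.val h2
      simpa using h3
    have hinveq : ∀ x, σ⁻¹ x = σ'⁻¹ x := by
      intro x
      apply eq_of_rowcol t (hr x)
      rw [colIdx_inv t hcolstab x, colIdx_inv t hcolstab' x]
    have : σ⁻¹ = σ'⁻¹ := Equiv.ext hinveq
    calc σ = (σ⁻¹)⁻¹ := by simp
    _ = (σ'⁻¹)⁻¹ := by rw [this]
    _ = σ' := by simp
  · -- surjective
    intro ρ hρ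
    obtain ⟨-, hρ1, hρ2⟩ := Finset.mem_filter.mp hρ
    have hcell : ∀ x : Fin n, (ρ x : ℕ) < μ.length ∧ colIdx t x < μ.getD (ρ x : ℕ) 0 := by
      intro x
      have := (hρ2 (colIdx t x)).1 (show x ∈ {y | colIdx t y = colIdx t x} from rfl)
      rw [Set.mem_Iio, lt_LF_iff hdist] at this
      exact this
    set g : Fin n → Fin n := fun x =>
      t ⟨⟨(ρ x : ℕ), (hcell x).1⟩, ⟨colIdx t x, by
        rw [← getD_fin μ ⟨(ρ x : ℕ), (hcell x).1⟩]; exact (hcell x).2⟩⟩ with hg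
    have hgrow : ∀ x, rowIdx t (g x) = (ρ x : ℕ) := by
      intro x
      rw [hg]
      exact rowIdx_cell t _
    have hgcol : ∀ x, colIdx t (g x) = colIdx t x := by
      intro x
      rw [hg]
      exact colIdx_cell t _
    have hginj : Function.Injective g := by
      intro x y hxy
      have hrow : (ρ x : ℕ) = (ρ y : ℕ) := by rw [← hgrow x, ← hgrow y, hxy]
      have hcol : colIdx t x = colIdx t y := by rw [← hgcol x, ← hgcol y, hxy]
      exact (hρ2 (colIdx t x)).2.1 (show x ∈ {z | colIdx t z = colIdx t x} from rfl)
        (show y ∈ {z | colIdx t z = colIdx t x} from hcol.symm) hrow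
    have hgbij : Function.Bijective g := (Finite.injective_iff_bijective).mp hginj
    set σ : Equiv.Perm (Fin n) := (Equiv.ofBijective g hgbij).symm with hσdef
    have hσinv : ∀ x, σ⁻¹ x = g x := by
      intro x
      show σ.symm x = g x
      rw [hσdef]
      simp [Equiv.ofBijective]
    have hσcolstab : ∀ i, colIdx t (σ i) = colIdx t i := by
      intro i
      have h1 : colIdx t (σ⁻¹ (σ i)) = colIdx t (σ i) := by
        rw [hσinv (σ i), hgcol]
      rw [show σ⁻¹ (σ i) = i by simp] at h1
      exact h1.symm
    refine ⟨σ, ?_, ?_⟩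
    · apply Finset.mem_filter.mpr
      constructor
      · exact (mem_colStab_iff t).mpr hσcolstab
      · rw [fix_iff t π σ]
        intro x
        rw [hσinv (π x), hσinv x, hgrow, hgrow]
        exact hρ1 x
    · funext x
      apply Fin.ext
      show rowIdx t (σ⁻¹ x) = (ρ x : ℕ)
      rw [hσinv x, hgrow]

end OddBridge

namespace OddParity
open OddCore OddAux Finset

variable {n : ℕ} {μ : List ℕ}

noncomputable instance : Fintype (Tabloid n μ) := by
  unfold Tabloid
  infer_instance

lemma tabForm_eq_sum (x y : Tabloid n μ →₀ ℤ) :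
    tabForm x y = ∑ T : Tabloid n μ, x T * y T :=
  Finsupp.sum_fintype _ _ (fun T => zero_mul _)

lemma permMap_apply (π : Equiv.Perm (Fin n))
    (hinvT : ∀ T : Tabloid n μ, permTabloid π (permTabloid π T) = T)
    (x : Tabloid n μ →₀ ℤ) (T : Tabloid n μ) :
    permMap π x T = x (permTabloid π T) := by
  have hinj : Function.Injective (permTabloid (n := n) (μ := μ) π) := by
    intro A B h
    rw [← hinvT A, h, hinvT]
  have h1 := Finsupp.mapDomain_apply hinj x (permTabloid π T)
  show Finsupp.mapDomain (permTabloid π) x T = x (permTabloid π T)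
  rw [← h1]
  congr 1
  rw [hinvT]

lemma polytabloid_apply (t : YoungTableau n μ) (T : Tabloid n μ) :
    polytabloid t T = ∑ σ ∈ colStab t,
      ((Equiv.Perm.sign σ : ℤˣ) : ℤ) * (if tabloidOf (permTableau σ t) = T then 1 else 0) := by
  show (∑ σ ∈ colStab t, ((Equiv.Perm.sign σ : ℤˣ) : ℤ)
    • Finsupp.single (tabloidOf (permTableau σ t)) 1) T = _
  rw [Finset.sum_apply']
  apply Finset.sum_congr rfl
  intro σ _
  rw [Finsupp.smul_apply, Finsupp.single_apply, smul_eq_mul]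

lemma parity_count (t : YoungTableau n μ) (π : Equiv.Perm (Fin n))
    (hinvT : ∀ T : Tabloid n μ, permTabloid π (permTabloid π T) = T)
    (hodd : Odd (tabForm (permMap π (polytabloid t)) (polytabloid t))) :
    Odd ((colStab t).filter (fun σ => permTabloid π (tabloidOf (permTableau σ t))
      = tabloidOf (permTableau σ t))).card := by
  classical
  set x := polytabloid t with hx
  have hsq : ∀ a : ZMod 2, a * a = a := by decide
  have h1 : ((tabForm (permMap π x) x : ℤ) : ZMod 2) = 1 := by
    obtain ⟨k, hk⟩ := hodd
    rw [hk]
    push_cast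
    rw [show ((2 : ZMod 2)) = 0 by decide]
    ring
  have h2 : tabForm (permMap π x) x = ∑ T : Tabloid n μ, x (permTabloid π T) * x T := by
    rw [tabForm_eq_sum]
    exact Finset.sum_congr rfl (fun T _ => by rw [permMap_apply π hinvT])
  have h3 : ((tabForm (permMap π x) x : ℤ) : ZMod 2)
      = ∑ T : Tabloid n μ, (((x (permTabloid π T) : ℤ) : ZMod 2)) * ((x T : ℤ) : ZMod 2) := by
    rw [h2]
    push_cast
    rfl
  set g : Tabloid n μ → ZMod 2 :=
    fun T => (((x (permTabloid π T) : ℤ) : ZMod 2)) * ((x T : ℤ) : ZMod 2) with hgdef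
  have hsplit : ∑ T : Tabloid n μ, g T
      = ∑ T ∈ univ.filter (fun T : Tabloid n μ => permTabloid π T = T), g T
        + ∑ T ∈ univ.filter (fun T : Tabloid n μ => ¬ permTabloid π T = T), g T :=
    (Finset.sum_filter_add_sum_filter_not _ _ _).symm
  have hzero : ∑ T ∈ univ.filter (fun T : Tabloid n μ => ¬ permTabloid π T = T), g T = 0 := by
    apply Finset.sum_involution (fun T _ => permTabloid π T)
    · intro T hT
      show g T + g (permTabloid π T) = 0
      rw [hgdef]
      simp only
      rw [hinvT T, mul_comm]
      exact CharTwo.add_self_eq_zero _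
    · intro T hT _
      exact (Finset.mem_filter.mp hT).2
    · intro T hT
      refine Finset.mem_filter.mpr ⟨Finset.mem_univ _, ?_⟩
      intro h
      rw [hinvT T] at h
      exact (Finset.mem_filter.mp hT).2 h.symm
    · intro T hT
      exact hinvT T
  have hfixsum : ∑ T ∈ univ.filter (fun T : Tabloid n μ => permTabloid π T = T), g T
      = ∑ T ∈ univ.filter (fun T : Tabloid n μ => permTabloid π T = T), ((x T : ℤ) : ZMod 2) := by
    apply Finset.sum_congr rfl
    intro T hT
    have hfix := (Finset.mem_filter.mp hT).2
    rw [hgdef]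
    simp only
    rw [hfix, hsq]
  have hsgn : ∀ σ : Equiv.Perm (Fin n), (((Equiv.Perm.sign σ : ℤˣ) : ℤ) : ZMod 2) = 1 := by
    intro σ
    rcases Int.units_eq_one_or (Equiv.Perm.sign σ) with h | h <;> rw [h] <;> decide
  have hxT : ∀ T : Tabloid n μ, ((x T : ℤ) : ZMod 2)
      = ∑ σ ∈ colStab t, (if tabloidOf (permTableau σ t) = T then (1 : ZMod 2) else 0) := by
    intro T
    rw [hx, polytabloid_apply]
    rw [Int.cast_sum]
    apply Finset.sum_congr rfl
    intro σ _
    rw [Int.cast_mul, hsgn σ, one_mul]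
    split <;> simp
  have hswap : ∑ T ∈ univ.filter (fun T : Tabloid n μ => permTabloid π T = T), ((x T : ℤ) : ZMod 2)
      = (((colStab t).filter (fun σ => permTabloid π (tabloidOf (permTableau σ t))
          = tabloidOf (permTableau σ t))).card : ZMod 2) := by
    rw [Finset.sum_congr rfl (fun T _ => hxT T)]
    rw [Finset.sum_comm]
    have hinner : ∀ σ ∈ colStab t,
        (∑ T ∈ univ.filter (fun T : Tabloid n μ => permTabloid π T = T),
          (if tabloidOf (permTableau σ t) = T then (1 : ZMod 2) else 0))
        = (if permTabloid π (tabloidOf (permTableau σ t)) = tabloidOf (permTableau σ t)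
            then (1 : ZMod 2) else 0) := by
      intro σ _
      rw [Finset.sum_ite_eq]
      congr 1
      simp
    rw [Finset.sum_congr rfl hinner]
    rw [Finset.sum_boole]
  have hone : (1 : ZMod 2) = (((colStab t).filter (fun σ =>
      permTabloid π (tabloidOf (permTableau σ t)) = tabloidOf (permTableau σ t))).card : ZMod 2) := by
    rw [← h1, h3, hsplit, hzero, add_zero, hfixsum, hswap]
  set c := ((colStab t).filter (fun σ =>
      permTabloid π (tabloidOf (permTableau σ t)) = tabloidOf (permTableau σ t))).card
  rw [Nat.odd_iff]
  by_contra h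
  have heven : 2 ∣ c := by omega
  have : (c : ZMod 2) = 0 := (ZMod.natCast_eq_zero_iff c 2).mpr heven
  rw [← hone] at this
  exact absurd this (by decide)

end OddParity

/-- Let `μ` be a partition of `n` with distinct parts, `t` a `μ`-tableau and `π ∈ S_n` an
`m`-involution (`m ≥ 1`) with `⟨π·e_t, e_t⟩` odd.  Then `m ≥ (n − |μ|_a)/2`; equivalently,
`m ≥ Σ_{j ≥ 1} μ_{2j}`. -/
theorem of_odd_tabForm_lower_bound
    (hpos : ∀ i ∈ μ, 0 < i) (hdist : μ.Chain' (· > ·)) (hsum : μ.sum = n)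
    (t : YoungTableau n μ) (m : ℕ) (hm : 1 ≤ m) (π : Equiv.Perm (Fin n))
    (hπ : π.cycleType = Multiset.replicate m 2)
    (hodd : Odd (tabForm (permMap π (polytabloid t)) (polytabloid t))) :
    ((n : ℚ) - (μ.map fun i => (i : ℚ)).alternatingSum) / 2 ≤ m ∧
    (∑ i ∈ Finset.range μ.length, if i % 2 = 1 then μ.getD i 0 else 0) ≤ m := by
  classical
  have hord : orderOf π ∣ 2 := by
    rw [← Equiv.Perm.lcm_cycleType, hπ]
    apply Multiset.lcm_dvd.mpr
    intro b hb
    rw [Multiset.eq_of_mem_replicate hb]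
  have hπ2 : π ^ 2 = 1 := orderOf_dvd_iff_pow_eq_one.mp hord
  have hinv : ∀ x, π (π x) = x := by
    intro x
    have h1 : (π ^ 2) x = x := by rw [hπ2]; rfl
    rw [pow_succ, pow_one, Equiv.Perm.mul_apply] at h1
    exact h1
  have hinvT : ∀ T : Tabloid n μ, permTabloid π (permTabloid π T) = T := by
    intro T
    apply Subtype.ext
    funext r
    show ((T.1 r).image π).image π = T.1 r
    rw [Finset.image_image]
    have h2 : (⇑π ∘ ⇑π) = id := funext hinv
    rw [h2, Finset.image_id]
  have hsupp : π.support.card = 2 * m := by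
    have h := Equiv.Perm.sum_cycleType π
    rw [hπ, Multiset.sum_replicate, smul_eq_mul] at h
    omega
  have hfixcard : (Finset.univ.filter (fun x : Fin n => π x = x)).card + 2 * m = n := by
    have hs : Finset.univ.filter (fun x : Fin n => ¬ π x = x) = π.support := by
      ext y; simp [Equiv.Perm.mem_support]
    have h := Finset.card_filter_add_card_filter_not
      (s := (Finset.univ : Finset (Fin n))) (p := fun x => π x = x)
    rw [hs, hsupp] at h
    simpa using h
  have hlen_le : μ.length ≤ n := by
    rw [← hsum]
    exact List.length_le_sum_of_one_le μ hpos
  have hodd1 := OddParity.parity_count t π hinvT hodd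
  rw [OddBridge.card_bridge t hdist hlen_le π] at hodd1
  have hLN : ∀ x : Fin n, OddBridge.LF μ (colIdx t x) ≤ n := by
    intro x
    calc OddBridge.LF μ (colIdx t x) ≤ (Finset.range μ.length).card :=
      Finset.card_filter_le _ _
    _ = μ.length := Finset.card_range _
    _ ≤ n := hlen_le
  have hcore := OddCore.core_bound hinv hLN hodd1
  have hn2 : 2 ≤ n := by omega
  have hlen0 : 0 < μ.length := by
    by_contra h
    have h0 : μ = [] := List.eq_nil_of_length_eq_zero (by omega)
    rw [h0] at hsum
    simp at hsum
    omega
  set μ0 := μ.getD 0 0 with hμ0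
  have hle0 : ∀ r, r < μ.length → μ.getD r 0 ≤ μ0 := by
    intro r hr
    rcases Nat.eq_zero_or_pos r with rfl | hrp
    · exact le_refl _
    · exact le_of_lt (OddBridge.sorted_strict hdist hrp hr)
  have himage : Finset.univ.image (colIdx t) = Finset.range μ0 := by
    ext c
    simp only [Finset.mem_image, Finset.mem_range]
    constructor
    · rintro ⟨x, -, rfl⟩
      have h1 := OddBridge.col_lt t x
      have h2 := hle0 _ (OddBridge.row_lt t x)
      omega
    · intro hc
      have hc2 : c < μ.get ⟨0, hlen0⟩ := by
        rw [← OddBridge.getD_fin μ ⟨0, hlen0⟩]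
        exact hc
      exact ⟨t ⟨⟨0, hlen0⟩, ⟨c, hc2⟩⟩, Finset.mem_univ _, OddBridge.colIdx_cell t _⟩
  set LFf := OddBridge.LF μ with hLFf
  set Sodd := ∑ i ∈ Finset.range μ.length, if i % 2 = 1 then μ.getD i 0 else 0 with hSodd
  have hfil : ∀ r, r < μ.length →
      (Finset.range μ0).filter (fun c => c < μ.getD r 0) = Finset.range (μ.getD r 0) := by
    intro r hr
    ext c
    simp only [Finset.mem_filter, Finset.mem_range]
    have := hle0 r hr
    omega
  have hI1 : ∑ c ∈ Finset.range μ0, LFf c = n := by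
    have h1 : ∀ c, LFf c = ∑ r ∈ Finset.range μ.length, if c < μ.getD r 0 then 1 else 0 := by
      intro c
      rw [hLFf]
      exact Finset.card_filter _ _
    rw [Finset.sum_congr rfl (fun c _ => h1 c), Finset.sum_comm]
    have h2 : ∀ r ∈ Finset.range μ.length,
        (∑ c ∈ Finset.range μ0, if c < μ.getD r 0 then 1 else 0) = μ.getD r 0 := by
      intro r hr
      rw [← Finset.card_filter, hfil r (Finset.mem_range.mp hr), Finset.card_range]
    rw [Finset.sum_congr rfl h2, ← OddAux.sum_formula_nat, hsum]
  have hkey : ∀ c, LFf c / 2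
      = ((Finset.range μ.length).filter (fun r => r % 2 = 1 ∧ c < μ.getD r 0)).card := by
    intro c
    have hset : (Finset.range μ.length).filter (fun r => r % 2 = 1 ∧ c < μ.getD r 0)
        = (Finset.range (LFf c)).filter (fun r => r % 2 = 1) := by
      ext r
      simp only [Finset.mem_filter, Finset.mem_range]
      constructor
      · rintro ⟨h1, h2, h3⟩
        exact ⟨(OddBridge.lt_LF_iff hdist c r).mpr ⟨h1, h3⟩, h2⟩
      · rintro ⟨h1, h2⟩
        have h3 := (OddBridge.lt_LF_iff hdist c r).mp h1
        exact ⟨h3.1, h2, h3.2⟩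
    rw [hset, OddAux.half_count]
  have hI3 : ∑ c ∈ Finset.range μ0, LFf c / 2 = Sodd := by
    rw [Finset.sum_congr rfl (fun c _ => hkey c)]
    have h1 : ∀ c : ℕ, ((Finset.range μ.length).filter (fun r => r % 2 = 1 ∧ c < μ.getD r 0)).card
        = ∑ r ∈ Finset.range μ.length, if r % 2 = 1 ∧ c < μ.getD r 0 then 1 else 0 :=
      fun c => Finset.card_filter _ _
    rw [Finset.sum_congr rfl (fun c _ => h1 c), Finset.sum_comm, hSodd]
    apply Finset.sum_congr rfl
    intro r hr
    have hr' := Finset.mem_range.mp hr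
    by_cases h : r % 2 = 1
    · rw [if_pos h]
      have h4 : ∀ c ∈ Finset.range μ0,
          (if r % 2 = 1 ∧ c < μ.getD r 0 then 1 else 0) = (if c < μ.getD r 0 then 1 else 0) := by
        intro c _; simp [h]
      rw [Finset.sum_congr rfl h4, ← Finset.card_filter, hfil r hr', Finset.card_range]
    · rw [if_neg h]
      apply Finset.sum_eq_zero
      intro c _
      simp [h]
  have hI2 : ((Finset.range μ0).filter (fun c => LFf c % 2 = 1)).card
      = ∑ c ∈ Finset.range μ0, LFf c % 2 := by
    rw [Finset.card_filter]
    apply Finset.sum_congr rfl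
    intro c _
    by_cases h : LFf c % 2 = 1
    · rw [if_pos h, h]
    · rw [if_neg h]; omega
  have htotal : n = 2 * Sodd + ∑ c ∈ Finset.range μ0, LFf c % 2 := by
    have hdecomp : ∀ c ∈ Finset.range μ0, LFf c = 2 * (LFf c / 2) + LFf c % 2 :=
      fun c _ => by omega
    rw [← hI1, ← hI3, Finset.sum_congr rfl hdecomp, Finset.sum_add_distrib, Finset.mul_sum]
  rw [himage] at hcore
  have hfinal : Sodd ≤ m := by omega
  constructor
  · have halt : (μ.map (fun i : ℕ => (i : ℚ))).alternatingSum
        = ∑ i ∈ Finset.range μ.length, (-1 : ℚ)^i * (μ.getD i 0 : ℚ) := by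
      rw [OddAux.alt_formula]
      rw [List.length_map]
      apply Finset.sum_congr rfl
      intro i _
      congr 1
      have h5 := List.getD_map (l := μ) (n := i) (f := fun j : ℕ => (j : ℚ)) (d := 0)
      simpa using h5
    have hnsum : (n : ℚ) = ∑ i ∈ Finset.range μ.length, (μ.getD i 0 : ℚ) := by
      rw [← hsum, OddAux.sum_formula_nat]
      push_cast
      rfl
    have hSoddQ : (Sodd : ℚ)
        = ∑ i ∈ Finset.range μ.length, (if i % 2 = 1 then (μ.getD i 0 : ℚ) else 0) := by
      rw [hSodd]
      push_cast
      apply Finset.sum_congr rfl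
      intro i _
      split <;> simp
    have hdiff : (n : ℚ) - (μ.map (fun i : ℕ => (i : ℚ))).alternatingSum = 2 * (Sodd : ℚ) := by
      rw [halt, hnsum, hSoddQ, ← Finset.sum_sub_distrib, Finset.mul_sum]
      apply Finset.sum_congr rfl
      intro i _
      rcases Nat.even_or_odd i with he | ho
      · have h1 : (-1 : ℚ)^i = 1 := he.neg_one_pow
        have h2 : ¬ (i % 2 = 1) := by
          have := Nat.even_iff.mp he
          omega
        rw [h1, if_neg h2]
        ring
      · have h1 : (-1 : ℚ)^i = -1 := ho.neg_one_pow
        have h2 : i % 2 = 1 := Nat.odd_iff.mp ho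
        rw [h1, if_pos h2]
        ring
    have hX : ((n : ℚ) - (μ.map fun i => (i : ℚ)).alternatingSum) = 2 * (Sodd : ℚ) := by
      rw [OddAux.coe_list_eq_map]
      exact hdiff
    rw [hX]
    have hc : (Sodd : ℚ) ≤ (m : ℚ) := by exact_mod_cast hfinal
    linarith
  · exact hfinal


end
end

section
/- If μ is a partition of n with distinct parts, then |μ|_a ≡ n (mod 2), ℓ_o(μ) ≡ n (mod 2), and ℓ_o(μ) ≤ |μ|_a. -/
/-- The alternating sum `|μ|_a := Σ_j (−1)^{j+1} μ_j` of a partition,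
where the parts are listed in (weakly) decreasing order. -/
noncomputable def Nat.Partition.altSum {n : ℕ} (μ : Nat.Partition n) : ℤ :=
  (((μ.parts.sort (· ≤ ·)).reverse).map fun i => (i : ℤ)).alternatingSum

/-- `ℓ_o(μ)`: the number of odd parts of a partition, counted with multiplicity. -/
def Nat.Partition.oddPartsCount {n : ℕ} (μ : Nat.Partition n) : ℕ :=
  Multiset.card (μ.parts.filter fun i => Odd i)

private lemma map_bridge (l : List ℕ) :
    (l.map fun i => (i : ℤ)) = l.map (fun i : ℕ => (i : ℤ)) := by
  induction l with
  | nil => rfl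
  | cons a t ih => simp_all [List.flatMap]

private lemma alt_aux : ∀ l : List ℕ, l.Pairwise (· > ·) → (∀ x ∈ l, 0 < x) →
    ((l.countP (fun i => decide (Odd i)) : ℤ) ≤ (l.map (fun i : ℕ => (i : ℤ))).alternatingSum ∧
     (l.map (fun i : ℕ => (i : ℤ))).alternatingSum ≡ (l.sum : ℤ) [ZMOD 2])
  | [] => by simp [Int.ModEq]
  | [a] => by
      intro _ hpos
      have ha := hpos a (by simp)
      constructor
      · by_cases h : Odd a <;>
          simp [List.countP_cons, h] <;> omega
      · simp [Int.ModEq]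
  | a :: b :: t => by
      intro hsort hpos
      have ih := alt_aux t (hsort.tail.tail) (fun x hx => hpos x (by simp [hx]))
      have hab : b < a := List.rel_of_pairwise_cons hsort (by simp)
      have hmap : ((a :: b :: t).map (fun i : ℕ => (i : ℤ))).alternatingSum
          = (a : ℤ) - b + (t.map (fun i : ℕ => (i : ℤ))).alternatingSum := by
        rw [List.map_cons, List.map_cons, List.alternatingSum_cons_cons]
      constructor
      · have h1 : ((a :: b :: t).countP (fun i => decide (Odd i)) : ℤ)
            = (if Odd a then 1 else 0) + (if Odd b then 1 else 0)
              + (t.countP (fun i => decide (Odd i)) : ℤ) := by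
          by_cases ha : Odd a <;> by_cases hb : Odd b <;>
            simp [List.countP_cons, ha, hb] <;> push_cast <;> ring
        rw [h1, hmap]
        have key : (if Odd a then (1 : ℤ) else 0) + (if Odd b then 1 else 0) ≤ (a : ℤ) - b := by
          by_cases ha : Odd a <;> by_cases hb : Odd b <;> simp [ha, hb]
          · obtain ⟨k, hk⟩ := ha; obtain ⟨m, hm⟩ := hb
            omega
          all_goals omega
        linarith [ih.1]
      · rw [hmap]
        have h2 : (a : ℤ) - b ≡ ((a : ℤ) + b) [ZMOD 2] := by
          unfold Int.ModEq; omega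
        have := h2.add ih.2
        have hsum : ((a :: b :: t).sum : ℤ) = (a : ℤ) + b + (t.sum : ℤ) := by
          push_cast [List.sum_cons]; ring
        rw [hsum]
        simpa [add_assoc] using this

private lemma odd_count_list : ∀ l : List ℕ,
    l.countP (fun i => decide (Odd i)) ≡ l.sum [MOD 2]
  | [] => by simp [Nat.ModEq]
  | a :: t => by
      have ih := odd_count_list t
      rw [List.countP_cons, List.sum_cons]
      rcases Nat.even_or_odd a with he | ho
      · have h1 : (decide (Odd a)) = false := by
          simp [Nat.not_odd_iff_even.mpr he]
        obtain ⟨k, hk⟩ := he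
        rw [h1]
        simp only [Bool.false_eq_true, if_false, add_zero]
        unfold Nat.ModEq at *
        omega
      · have h1 : (decide (Odd a)) = true := by simp [ho]
        obtain ⟨k, hk⟩ := ho
        rw [h1]
        simp only [if_true]
        unfold Nat.ModEq at *
        omega

/-- If `μ` is a partition of `n` with distinct parts, then `|μ|_a ≡ n (mod 2)`,
`ℓ_o(μ) ≡ n (mod 2)`, and `ℓ_o(μ) ≤ |μ|_a`. -/
theorem altSum_mod_two_and_oddPartsCount_le {n : ℕ} (μ : Nat.Partition n)
    (hdist : μ.parts.Nodup) :
    μ.altSum ≡ (n : ℤ) [ZMOD 2] ∧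
    μ.oddPartsCount ≡ n [MOD 2] ∧
    (μ.oddPartsCount : ℤ) ≤ μ.altSum := by
  set l := (μ.parts.sort (· ≤ ·)).reverse with hl
  have hperm : (l : Multiset ℕ) = μ.parts := by
    rw [hl, Multiset.coe_reverse]
    exact Multiset.sort_eq _ _
  have hsorted_le : (μ.parts.sort (· ≤ ·)).Pairwise (· ≤ ·) :=
    Multiset.pairwise_sort _ _
  have hnodup : (μ.parts.sort (· ≤ ·)).Nodup := by
    rw [← Multiset.coe_nodup, Multiset.sort_eq]; exact hdist
  have hsorted_lt : (μ.parts.sort (· ≤ ·)).Pairwise (· < ·) :=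
    (List.sortedLT_iff_nodup_and_sortedLE.mpr ⟨hnodup, hsorted_le.sortedLE⟩).pairwise
  have hsort : l.Pairwise (· > ·) := by
    rw [hl, List.pairwise_reverse]
    exact hsorted_lt
  have hpos : ∀ x ∈ l, 0 < x := by
    intro x hx
    apply μ.parts_pos
    rw [← hperm]; exact_mod_cast hx
  have hsum : l.sum = n := by
    have : (l : Multiset ℕ).sum = μ.parts.sum := by rw [hperm]
    simpa [μ.parts_sum] using this
  have hcount : μ.oddPartsCount = l.countP (fun i => decide (Odd i)) := by
    unfold Nat.Partition.oddPartsCount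
    rw [← hperm]
    rw [show Multiset.filter (fun i => Odd i) (↑l : Multiset ℕ)
        = ((l.filter fun i => decide (Odd i) : List ℕ) : Multiset ℕ) from rfl]
    rw [Multiset.coe_card, List.countP_eq_length_filter]
  have haS : μ.altSum = (l.map (fun i : ℕ => (i : ℤ))).alternatingSum := by
    unfold Nat.Partition.altSum
    rw [← hl, map_bridge]
  obtain ⟨h1, h2⟩ := alt_aux l hsort hpos
  refine ⟨?_, ?_, ?_⟩
  · rw [haS, ← hsum]; exact h2
  · rw [hcount, ← hsum]; exact odd_count_list l
  · rw [hcount, haS]; exact h1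
end
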